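/- arXiv:1612.06483 — 7 statements merged into one kernel-verified Lean document; each statement's English description precedes it below -/
import Mathlib

section
/- Let z0 ≠ z1 be real numbers and w2, w3 real numbers, and let κ ∈ (0, 1/2]. Define z4 = (z0 + z1)/2, and set: for T_A the axis pair (first vertex z0, second vertex z4) with off-axis values w2^A = (1 − κ)z0 + κ·w2 and w3^A = (1 − κ)z0 + κ·w3; for T_B the axis pair (first vertex z4, second vertex z1) with off-axis values w2^B = (1 − κ)z1 + κ·w2 and w3^B = (1 − κ)z1 + κ·w3. Let c_T, c_A, c_B denote the absolute relative distances of the triples (z0, z1; w2, w3), (z0, z4; w2^A, w3^A), (z4, z1; w2^B, w3^B) respectively. Then max(c_A, c_B) ≤ max(c_T, 1). -/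
/-- The first relative z-distance of an off-axis vertex with z-coordinate `w`
relative to axis vertices with z-coordinates `za` (first vertex) and `zb`. -/
noncomputable def firstRelDist (za zb w : ℝ) : ℝ := (w - za) / (zb - za)

/-- The absolute relative distance of the configuration `(za, zb; w, w')`:
the maximum of the absolute values of the first and second relative z-distances
of the two off-axis vertices `w` and `w'`. -/
noncomputable def absRelDist (za zb w w' : ℝ) : ℝ :=
  max (max |firstRelDist za zb w| |1 - firstRelDist za zb w|)
      (max |firstRelDist za zb w'| |1 - firstRelDist za zb w'|)

private lemma auxA (t x M : ℝ) (ht0 : 0 ≤ t) (ht1 : t ≤ 1) (hx : |x| ≤ M) :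
    |t * x| ≤ M := by
  rw [abs_mul, abs_of_nonneg ht0]
  have h0 : 0 ≤ |x| := abs_nonneg x
  nlinarith

private lemma auxB (t x M : ℝ) (ht0 : 0 ≤ t) (ht1 : t ≤ 1) (hM : 1 ≤ M)
    (hx : |1 - x| ≤ M) : |1 - t * x| ≤ M := by
  rw [abs_le] at hx ⊢
  constructor <;> nlinarith [hx.1, hx.2]

/-- Lemma 4.5: one anisotropic edge refinement with grading parameter
`κ ∈ (0, 1/2]` of an e-tetrahedron with axis z-coordinates `z0 ≠ z1` and
off-axis z-coordinates `w2, w3` produces two child e-tetrahedra `T_A`, `T_B`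
whose absolute relative distances satisfy `max c_A c_B ≤ max c_T 1`. -/
theorem stmt_1 (z0 z1 w2 w3 κ : ℝ) (hz : z0 ≠ z1) (hκ0 : 0 < κ) (hκ1 : κ ≤ 1 / 2)
    (z4 w2A w3A w2B w3B cT cA cB : ℝ)
    (hz4 : z4 = (z0 + z1) / 2)
    (hw2A : w2A = (1 - κ) * z0 + κ * w2) (hw3A : w3A = (1 - κ) * z0 + κ * w3)
    (hw2B : w2B = (1 - κ) * z1 + κ * w2) (hw3B : w3B = (1 - κ) * z1 + κ * w3)
    (hcT : cT = absRelDist z0 z1 w2 w3)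
    (hcA : cA = absRelDist z0 z4 w2A w3A)
    (hcB : cB = absRelDist z4 z1 w2B w3B) :
    max cA cB ≤ max cT 1 := by
  subst hz4 hw2A hw3A hw2B hw3B hcT hcA hcB
  have hd : z1 - z0 ≠ 0 := sub_ne_zero.mpr hz.symm
  have hdA : (z0 + z1) / 2 - z0 ≠ 0 := fun h => hd (by linarith)
  have hdB : z1 - (z0 + z1) / 2 ≠ 0 := fun h => hd (by linarith)
  have eA2 : firstRelDist z0 ((z0 + z1) / 2) ((1 - κ) * z0 + κ * w2)
      = (2 * κ) * firstRelDist z0 z1 w2 := by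
    unfold firstRelDist; rw [div_eq_iff hdA]; field_simp; ring
  have eA3 : firstRelDist z0 ((z0 + z1) / 2) ((1 - κ) * z0 + κ * w3)
      = (2 * κ) * firstRelDist z0 z1 w3 := by
    unfold firstRelDist; rw [div_eq_iff hdA]; field_simp; ring
  have eB2 : firstRelDist ((z0 + z1) / 2) z1 ((1 - κ) * z1 + κ * w2)
      = 1 - (2 * κ) * (1 - firstRelDist z0 z1 w2) := by
    unfold firstRelDist; rw [div_eq_iff hdB]; field_simp; ring
  have eB3 : firstRelDist ((z0 + z1) / 2) z1 ((1 - κ) * z1 + κ * w3)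
      = 1 - (2 * κ) * (1 - firstRelDist z0 z1 w3) := by
    unfold firstRelDist; rw [div_eq_iff hdB]; field_simp; ring
  set c2 := firstRelDist z0 z1 w2
  set c3 := firstRelDist z0 z1 w3
  set M := max (absRelDist z0 z1 w2 w3) 1 with hM
  have hM1 : (1 : ℝ) ≤ M := le_max_right _ _
  have hb2 : |c2| ≤ M := le_trans (le_trans (le_max_left _ _) (le_max_left _ _)) (le_max_left _ _)
  have hb2' : |1 - c2| ≤ M :=
    le_trans (le_trans (le_max_right _ _) (le_max_left _ _)) (le_max_left _ _)
  have hb3 : |c3| ≤ M := le_trans (le_trans (le_max_left _ _) (le_max_right _ _)) (le_max_left _ _)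
  have hb3' : |1 - c3| ≤ M :=
    le_trans (le_trans (le_max_right _ _) (le_max_right _ _)) (le_max_left _ _)
  have ht0 : (0 : ℝ) ≤ 2 * κ := by linarith
  have ht1 : (2 : ℝ) * κ ≤ 1 := by linarith
  conv_lhs => rw [absRelDist, absRelDist, eA2, eA3, eB2, eB3]
  simp only [max_le_iff]
  refine ⟨⟨⟨auxA _ _ _ ht0 ht1 hb2, auxB _ _ _ ht0 ht1 hM1 hb2'⟩,
    ⟨auxA _ _ _ ht0 ht1 hb3, auxB _ _ _ ht0 ht1 hM1 hb3'⟩⟩,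
    ⟨⟨?_, ?_⟩, ⟨?_, ?_⟩⟩⟩
  · have := auxB (2 * κ) (1 - c2) M ht0 ht1 hM1 (by simpa using hb2)
    simpa using this
  · have := auxA (2 * κ) (1 - c2) M ht0 ht1 hb2'
    simpa using this
  · have := auxB (2 * κ) (1 - c3) M ht0 ht1 hM1 (by simpa using hb3)
    simpa using this
  · have := auxA (2 * κ) (1 - c3) M ht0 ht1 hb3'
    simpa using this
end

section
/- Let z0 ≠ z1 be real numbers and w2, w3 real numbers, and let κ_v, κ_ev be real numbers with 0 < κ_ev ≤ κ_v. Define z4 = (1 − κ_v)z0 + κ_v·z1, w2^R = (1 − κ_ev)z0 + κ_ev·w2 and w3^R = (1 − κ_ev)z0 + κ_ev·w3. Let c_T be the absolute relative distance of (z0, z1; w2, w3) and c_R the absolute relative distance of (z0, z4; w2^R, w3^R). Then c_R ≤ max(c_T, 1). -/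
/-- Lemma 4.13: one anisotropic refinement of an ev-tetrahedron with vertex
grading parameter `κ_v` and edge-cross-section parameter `κ_ev`, with
`0 < κ_ev ≤ κ_v`, produces a child ev-tetrahedron `T_R` whose absolute
relative distance satisfies `c_R ≤ max c_T 1`. -/
theorem stmt_2 (z0 z1 w2 w3 κv κev : ℝ) (hz : z0 ≠ z1)
    (hκev : 0 < κev) (hκvev : κev ≤ κv)
    (z4 w2R w3R cT cR : ℝ)
    (hz4 : z4 = (1 - κv) * z0 + κv * z1)
    (hw2R : w2R = (1 - κev) * z0 + κev * w2)
    (hw3R : w3R = (1 - κev) * z0 + κev * w3)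
    (hcT : cT = absRelDist z0 z1 w2 w3)
    (hcR : cR = absRelDist z0 z4 w2R w3R) :
    cR ≤ max cT 1 := by
  have hκv : 0 < κv := lt_of_lt_of_le hκev hκvev
  have hz10 : z1 - z0 ≠ 0 := sub_ne_zero.mpr (Ne.symm hz)
  set t : ℝ := κev / κv with ht
  have ht0 : 0 ≤ t := le_of_lt (div_pos hκev hκv)
  have ht1 : t ≤ 1 := (div_le_one hκv).mpr hκvev
  have key : ∀ w : ℝ, firstRelDist z0 z4 ((1 - κev) * z0 + κev * w)
      = t * firstRelDist z0 z1 w := by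
    intro w
    have h4 : ((1 - κv) * z0 + κv * z1) - z0 = κv * (z1 - z0) := by ring
    have h5 : (1 - κev) * z0 + κev * w - z0 = κev * (w - z0) := by ring
    rw [firstRelDist, firstRelDist, hz4, h4, h5, ht, div_mul_div_comm]
  have aux : ∀ c : ℝ, max |t * c| |1 - t * c| ≤ max (max |c| |1 - c|) 1 := by
    intro c
    apply max_le
    · calc |t * c| = t * |c| := by rw [abs_mul, abs_of_nonneg ht0]
        _ ≤ 1 * |c| := by nlinarith [abs_nonneg c]
        _ ≤ max (max |c| |1 - c|) 1 := by
            rw [one_mul]; exact le_max_of_le_left (le_max_left _ _)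
    · have h1 : 1 - t * c = (1 - t) * 1 + t * (1 - c) := by ring
      calc |1 - t * c| ≤ (1 - t) * |(1 : ℝ)| + t * |1 - c| := by
            rw [h1]
            refine (abs_add_le _ _).trans ?_
            rw [abs_mul, abs_mul, abs_of_nonneg (by linarith : (0:ℝ) ≤ 1 - t),
              abs_of_nonneg ht0]
        _ ≤ (1 - t) * max (max |c| |1 - c|) 1 + t * max (max |c| |1 - c|) 1 := by
            gcongr
            all_goals first
              | linarith
              | simp
              | exact le_max_of_le_left (le_max_right _ _)
        _ = max (max |c| |1 - c|) 1 := by ring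
  rw [hcR, hcT, absRelDist, absRelDist, hw2R, hw3R, key w2, key w3]
  apply max_le
  · exact (aux _).trans (max_le_max (le_max_left _ _) le_rfl)
  · exact (aux _).trans (max_le_max (le_max_right _ _) le_rfl)
end

section
/- Let l > 0 and λ2, λ3, ξ3 ∈ ℝ with λ2 ≠ 0 and ξ3 ≠ 0, and define the reference vertices x̂0 = (0, 0, −l/2), x̂1 = (0, 0, l/2), x̂2 = (λ2, 0, −l/2), x̂3 = (λ3, ξ3, −l/2) in ℝ³. Let i ∈ ℕ, κ ∈ (0, 1/2], and ζ2, ζ3 ∈ ℝ, and define the points γ0 = (0, 0, −2^{−i}·l/2), γ1 = (0, 0, 2^{−i}·l/2), γ2 = (κ^i·λ2, 0, ζ2), γ3 = (κ^i·λ3, κ^i·ξ3, ζ3). Set b1 = −(2^i·ζ2 + l/2)/λ2 and b2 = (2^i·(ζ2·λ3 − λ2·ζ3) + (l/2)·(λ3 − λ2))/(λ2·ξ3), and let B be the linear map on ℝ³ with matrix rows (κ^{−i}, 0, 0), (0, κ^{−i}, 0), (b1·κ^{−i}, b2·κ^{−i}, 2^i). Then B·γ_k = x̂_k for k = 0, 1,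 2, 3, B is invertible, and B maps the convex hull of {γ0, γ1, γ2, γ3} bijectively onto the convex hull of {x̂0, x̂1, x̂2, x̂3}. Moreover, if in addition |ζ2| ≤ M·2^{−i}·l and |ζ3| ≤ M·2^{−i}·l for some M ≥ 0, then |b1| ≤ (M + 1/2)·l/|λ2| and |b2| ≤ (M + 1/2)·l·(|λ2| + |λ3|)/(|λ2|·|ξ3|); in particular b1 and b2 are bounded independently of i. -/
/-- Lemma 4.6: the explicit linear transformation `B_{e,i}` maps the level-`i`
e-tetrahedron `conv{γ0, γ1, γ2, γ3}` bijectively onto the reference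
e-tetrahedron `conv{xr0, xr1, xr2, xr3}`, sending vertex to vertex, and its
off-diagonal entries `b1, b2` are bounded independently of `i` whenever the
relative z-distances of the tetrahedron are bounded. -/
theorem stmt_3 (l lam2 lam3 xi3 : ℝ) (hl : 0 < l) (hlam2 : lam2 ≠ 0) (hxi3 : xi3 ≠ 0)
    (i : ℕ) (κ : ℝ) (hκ0 : 0 < κ) (hκ1 : κ ≤ 1 / 2) (ζ2 ζ3 : ℝ)
    (xr0 xr1 xr2 xr3 γ0 γ1 γ2 γ3 : Fin 3 → ℝ) (b1 b2 : ℝ) (B : Matrix (Fin 3) (Fin 3) ℝ)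
    (hxr0 : xr0 = ![0, 0, -l / 2]) (hxr1 : xr1 = ![0, 0, l / 2])
    (hxr2 : xr2 = ![lam2, 0, -l / 2]) (hxr3 : xr3 = ![lam3, xi3, -l / 2])
    (hγ0 : γ0 = ![0, 0, -((2 : ℝ) ^ (-(i : ℤ)) * l / 2)])
    (hγ1 : γ1 = ![0, 0, (2 : ℝ) ^ (-(i : ℤ)) * l / 2])
    (hγ2 : γ2 = ![κ ^ i * lam2, 0, ζ2])
    (hγ3 : γ3 = ![κ ^ i * lam3, κ ^ i * xi3, ζ3])
    (hb1 : b1 = -((2 : ℝ) ^ i * ζ2 + l / 2) / lam2)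
    (hb2 : b2 = ((2 : ℝ) ^ i * (ζ2 * lam3 - lam2 * ζ3) + l / 2 * (lam3 - lam2)) /
      (lam2 * xi3))
    (hB : B = !![κ ^ (-(i : ℤ)), 0, 0;
                 0, κ ^ (-(i : ℤ)), 0;
                 b1 * κ ^ (-(i : ℤ)), b2 * κ ^ (-(i : ℤ)), (2 : ℝ) ^ i]) :
    (B.mulVec γ0 = xr0 ∧ B.mulVec γ1 = xr1 ∧ B.mulVec γ2 = xr2 ∧ B.mulVec γ3 = xr3) ∧
    IsUnit B ∧
    Set.BijOn B.mulVec (convexHull ℝ {γ0, γ1, γ2, γ3}) (convexHull ℝ {xr0, xr1, xr2, xr3}) ∧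
    (∀ M : ℝ, 0 ≤ M → |ζ2| ≤ M * (2 : ℝ) ^ (-(i : ℤ)) * l → |ζ3| ≤ M * (2 : ℝ) ^ (-(i : ℤ)) * l →
      |b1| ≤ (M + 1 / 2) * l / |lam2| ∧
      |b2| ≤ (M + 1 / 2) * l * (|lam2| + |lam3|) / (|lam2| * |xi3|)) := by
  have hκ : κ ≠ 0 := ne_of_gt hκ0
  have hκi : (κ : ℝ) ^ i ≠ 0 := pow_ne_zero _ hκ
  have hzk : κ ^ (-(i : ℤ)) = (κ ^ i)⁻¹ := by rw [zpow_neg, zpow_natCast]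
  have hz2 : (2 : ℝ) ^ (-(i : ℤ)) = ((2 : ℝ) ^ i)⁻¹ := by rw [zpow_neg, zpow_natCast]
  have h2i : (2 : ℝ) ^ i ≠ 0 := by positivity
  have h0 : B.mulVec γ0 = xr0 := by
    subst hB hγ0 hxr0
    funext k; fin_cases k <;>
      simp [Matrix.mulVec, dotProduct, Fin.sum_univ_three, hzk, hz2] <;>
      field_simp <;> ring
  have h1 : B.mulVec γ1 = xr1 := by
    subst hB hγ1 hxr1
    funext k; fin_cases k <;>
      simp [Matrix.mulVec, dotProduct, Fin.sum_univ_three, hzk, hz2] <;>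
      field_simp <;> ring
  have h2 : B.mulVec γ2 = xr2 := by
    subst hB hγ2 hxr2 hb1
    funext k; fin_cases k <;>
      simp [Matrix.mulVec, dotProduct, Fin.sum_univ_three, hzk, hz2] <;>
      field_simp <;> ring
  have h3 : B.mulVec γ3 = xr3 := by
    subst hB hγ3 hxr3 hb1 hb2
    funext k; fin_cases k <;>
      simp [Matrix.mulVec, dotProduct, Fin.sum_univ_three, hzk, hz2] <;>
      field_simp <;> ring
  have hdet : B.det ≠ 0 := by
    subst hB
    simp [Matrix.det_fin_three, hzk]
    exact fun h => absurd h hκ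
  have hunit : IsUnit B := (Matrix.isUnit_iff_isUnit_det B).2 (isUnit_iff_ne_zero.2 hdet)
  have hinj : Function.Injective B.mulVec := Matrix.mulVec_injective_iff_isUnit.2 hunit
  have himg : B.mulVec '' (convexHull ℝ {γ0, γ1, γ2, γ3}) = convexHull ℝ {xr0, xr1, xr2, xr3} := by
    rw [← Matrix.coe_mulVecLin, B.mulVecLin.image_convexHull]
    congr 1
    simp only [Set.image_insert_eq, Set.image_singleton, Matrix.mulVecLin_apply, h0, h1, h2, h3]
  refine ⟨⟨h0, h1, h2, h3⟩, hunit, ⟨?_, hinj.injOn, ?_⟩, ?_⟩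
  · exact himg ▸ Set.mapsTo_image _ _
  · exact himg ▸ Set.Subset.rfl
  · intro M hM hz2' hz3'
    have h2pos : (0:ℝ) < (2:ℝ)^i := by positivity
    have hkey : (2:ℝ)^i * ((2:ℝ)^(-(i:ℤ))) = 1 := by
      rw [hz2]; field_simp
    have hζ2 : (2:ℝ)^i * |ζ2| ≤ M * l := by
      calc (2:ℝ)^i * |ζ2| ≤ (2:ℝ)^i * (M * (2 : ℝ) ^ (-(i : ℤ)) * l) := by
            exact mul_le_mul_of_nonneg_left hz2' (le_of_lt h2pos)
        _ = M * l := by rw [hz2]; field_simp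
    have hζ3 : (2:ℝ)^i * |ζ3| ≤ M * l := by
      calc (2:ℝ)^i * |ζ3| ≤ (2:ℝ)^i * (M * (2 : ℝ) ^ (-(i : ℤ)) * l) := by
            exact mul_le_mul_of_nonneg_left hz3' (le_of_lt h2pos)
        _ = M * l := by rw [hz2]; field_simp
    have hla2 : (0:ℝ) < |lam2| := abs_pos.2 hlam2
    have hxi3' : (0:ℝ) < |xi3| := abs_pos.2 hxi3
    constructor
    · rw [hb1, abs_div]
      have hnum1 : |-((2 : ℝ) ^ i * ζ2 + l / 2)| ≤ (M + 1/2) * l := by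
        rw [abs_neg]
        calc |(2 : ℝ) ^ i * ζ2 + l / 2| ≤ |(2:ℝ)^i * ζ2| + |l/2| := abs_add_le _ _
          _ = (2:ℝ)^i * |ζ2| + l/2 := by
              rw [abs_mul, abs_of_pos h2pos, abs_of_pos (by linarith : (0:ℝ) < l/2)]
          _ ≤ M * l + l/2 := by linarith
          _ = (M + 1/2) * l := by ring
      gcongr
    · rw [hb2, abs_div, abs_mul]
      have hnum : |(2 : ℝ) ^ i * (ζ2 * lam3 - lam2 * ζ3) + l / 2 * (lam3 - lam2)| ≤
          (M + 1/2) * l * (|lam2| + |lam3|) := by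
        calc |(2 : ℝ) ^ i * (ζ2 * lam3 - lam2 * ζ3) + l / 2 * (lam3 - lam2)|
            ≤ |(2:ℝ)^i * (ζ2 * lam3 - lam2 * ζ3)| + |l/2 * (lam3 - lam2)| := abs_add_le _ _
          _ ≤ (2:ℝ)^i * (|ζ2| * |lam3| + |lam2| * |ζ3|) + l/2 * (|lam3| + |lam2|) := by
              gcongr
              · rw [abs_mul, abs_of_pos h2pos]
                gcongr
                calc |ζ2 * lam3 - lam2 * ζ3| ≤ |ζ2 * lam3| + |lam2 * ζ3| := abs_sub _ _
                  _ = |ζ2| * |lam3| + |lam2| * |ζ3| := by rw [abs_mul, abs_mul]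
              · rw [abs_mul, abs_of_pos (by linarith : (0:ℝ) < l/2)]
                gcongr
                exact abs_sub _ _
          _ ≤ M * l * |lam3| + M * l * |lam2| + l/2 * (|lam3| + |lam2|) := by
              have := abs_nonneg lam3
              have := abs_nonneg lam2
              have := abs_nonneg ζ2
              have := abs_nonneg ζ3
              nlinarith
          _ = (M + 1/2) * l * (|lam2| + |lam3|) := by ring
      gcongr
end

section
/- Let l > 0 and λ2, λ3, ξ3 ∈ ℝ with λ2 ≠ 0 and ξ3 ≠ 0, and define the reference vertices x̂0 = (0, 0, −l/2), x̂1 = (0, 0, l/2), x̂2 = (λ2, 0, −l/2), x̂3 = (λ3, ξ3, −l/2) in ℝ³. Let i ∈ ℕ, let κ_v, κ_ev be reals with 0 < κ_ev ≤ κ_v ≤ 1/2, and let ζ2, ζ3 ∈ ℝ. Define γ0 = (0, 0, −κ_v^i·l/2), γ1 = (0, 0, κ_v^i·l/2), γ2 = (κ_ev^i·λ2, 0, ζ2), γ3 = (κ_ev^i·λ3, κ_ev^i·ξ3, ζ3). Set b1 = −(κ_v^{−i}·ζ2 + l/2)/λ2 and b2 = (κ_v^{−i}·(ζ2·λ3 −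 λ2·ζ3) + (l/2)·(λ3 − λ2))/(λ2·ξ3), and let B be the linear map on ℝ³ with matrix rows (κ_ev^{−i}, 0, 0), (0, κ_ev^{−i}, 0), (b1·κ_ev^{−i}, b2·κ_ev^{−i}, κ_v^{−i}). Then B·γ_k = x̂_k for k = 0, 1, 2, 3, B is invertible, and B maps the convex hull of {γ0, γ1, γ2, γ3} bijectively onto the convex hull of {x̂0, x̂1, x̂2, x̂3}. Moreover, if |ζ2| ≤ M·κ_v^i·l and |ζ3| ≤ M·κ_v^i·l for some M ≥ 0, then |b1| ≤ (M + 1/2)·l/|λ2| and |b2| ≤ (M + 1/2)·l·(|λ2| + |λ3|)/(|λ2|·|ξ3|); in particular b1 and b2 are bounded independently of i. -/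
/-- Lemma 4.15: the explicit linear transformation `B_{ev,i}` maps the level-`i`
ev-tetrahedron `conv{γ0, γ1, γ2, γ3}` bijectively onto the reference
tetrahedron `conv{xr0, xr1, xr2, xr3}`, sending vertex to vertex, and its
off-diagonal entries `b1, b2` are bounded independently of `i` whenever the
relative z-distances of the tetrahedron are bounded. -/
theorem stmt_4 (l lam2 lam3 xi3 : ℝ) (hl : 0 < l) (hlam2 : lam2 ≠ 0) (hxi3 : xi3 ≠ 0)
    (i : ℕ) (κv κev : ℝ) (hκev : 0 < κev) (hκvev : κev ≤ κv) (hκv : κv ≤ 1 / 2)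
    (ζ2 ζ3 : ℝ)
    (xr0 xr1 xr2 xr3 γ0 γ1 γ2 γ3 : Fin 3 → ℝ) (b1 b2 : ℝ) (B : Matrix (Fin 3) (Fin 3) ℝ)
    (hxr0 : xr0 = ![0, 0, -l / 2]) (hxr1 : xr1 = ![0, 0, l / 2])
    (hxr2 : xr2 = ![lam2, 0, -l / 2]) (hxr3 : xr3 = ![lam3, xi3, -l / 2])
    (hγ0 : γ0 = ![0, 0, -(κv ^ i * l / 2)])
    (hγ1 : γ1 = ![0, 0, κv ^ i * l / 2])
    (hγ2 : γ2 = ![κev ^ i * lam2, 0, ζ2])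
    (hγ3 : γ3 = ![κev ^ i * lam3, κev ^ i * xi3, ζ3])
    (hb1 : b1 = -(κv ^ (-(i : ℤ)) * ζ2 + l / 2) / lam2)
    (hb2 : b2 = (κv ^ (-(i : ℤ)) * (ζ2 * lam3 - lam2 * ζ3) + l / 2 * (lam3 - lam2)) /
      (lam2 * xi3))
    (hB : B = !![κev ^ (-(i : ℤ)), 0, 0;
                 0, κev ^ (-(i : ℤ)), 0;
                 b1 * κev ^ (-(i : ℤ)), b2 * κev ^ (-(i : ℤ)), κv ^ (-(i : ℤ))]) :
    (B.mulVec γ0 = xr0 ∧ B.mulVec γ1 = xr1 ∧ B.mulVec γ2 = xr2 ∧ B.mulVec γ3 = xr3) ∧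
    IsUnit B ∧
    Set.BijOn B.mulVec (convexHull ℝ {γ0, γ1, γ2, γ3}) (convexHull ℝ {xr0, xr1, xr2, xr3}) ∧
    (∀ M : ℝ, 0 ≤ M → |ζ2| ≤ M * κv ^ i * l → |ζ3| ≤ M * κv ^ i * l →
      |b1| ≤ (M + 1 / 2) * l / |lam2| ∧
      |b2| ≤ (M + 1 / 2) * l * (|lam2| + |lam3|) / (|lam2| * |xi3|)) := by
  have hκv0 : (0 : ℝ) < κv := lt_of_lt_of_le hκev hκvev
  have hκvne : κv ≠ 0 := ne_of_gt hκv0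
  have hκevne : κev ≠ 0 := ne_of_gt hκev
  have hκvi : (0 : ℝ) < κv ^ i := pow_pos hκv0 i
  have ev1 : κv ^ (-(i : ℤ)) = (κv ^ i)⁻¹ := by
    rw [zpow_neg, zpow_natCast]
  have ev2 : κev ^ (-(i : ℤ)) = (κev ^ i)⁻¹ := by
    rw [zpow_neg, zpow_natCast]
  have hκvin : (κv ^ i : ℝ) ≠ 0 := ne_of_gt hκvi
  have hκevin : (κev ^ i : ℝ) ≠ 0 := pow_ne_zero i hκevne
  have h0 : B.mulVec γ0 = xr0 := by
    subst hB hγ0 hxr0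
    funext k
    fin_cases k <;>
      simp [Matrix.mulVec, dotProduct, Fin.sum_univ_three, ev1, ev2] <;>
      field_simp
  have h1 : B.mulVec γ1 = xr1 := by
    subst hB hγ1 hxr1
    funext k
    fin_cases k <;>
      simp [Matrix.mulVec, dotProduct, Fin.sum_univ_three, ev1, ev2] <;>
      field_simp
  have h2 : B.mulVec γ2 = xr2 := by
    subst hB hγ2 hxr2 hb1 hb2
    funext k
    fin_cases k <;>
      simp [Matrix.mulVec, dotProduct, Fin.sum_univ_three, ev1, ev2] <;>
      field_simp <;> ring
  have h3 : B.mulVec γ3 = xr3 := by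
    subst hB hγ3 hxr3 hb1 hb2
    funext k
    fin_cases k <;>
      simp [Matrix.mulVec, dotProduct, Fin.sum_univ_three, ev1, ev2] <;>
      field_simp <;> ring
  have hdet : B.det ≠ 0 := by
    subst hB
    rw [Matrix.det_fin_three]
    simp
    exact ⟨fun h => absurd h hκevne, fun h => absurd h hκvne⟩
  have hunit : IsUnit B := by
    rw [Matrix.isUnit_iff_isUnit_det]
    exact hdet.isUnit
  have hinj : Function.Injective B.mulVec :=
    Matrix.mulVec_injective_iff_isUnit.mpr hunit
  refine ⟨⟨h0, h1, h2, h3⟩, hunit, ?_, ?_⟩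
  · have himg : B.mulVec '' (convexHull ℝ {γ0, γ1, γ2, γ3}) =
        convexHull ℝ {xr0, xr1, xr2, xr3} := by
      have := (B.mulVecLin).image_convexHull ({γ0, γ1, γ2, γ3} : Set (Fin 3 → ℝ))
      rw [Matrix.coe_mulVecLin] at this
      rw [this]
      congr 1
      simp only [Set.image_insert_eq, Set.image_singleton, h0, h1, h2, h3]
    exact ⟨fun x hx => himg ▸ Set.mem_image_of_mem _ hx,
      hinj.injOn, fun y hy => by rw [← himg] at hy; exact hy⟩
  · intro M hM hz2 hz3
    have hl2 : (0 : ℝ) < |lam2| := abs_pos.mpr hlam2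
    have hx3 : (0 : ℝ) < |xi3| := abs_pos.mpr hxi3
    have key2 : (κv ^ i)⁻¹ * |ζ2| ≤ M * l := by
      rw [inv_mul_le_iff₀ hκvi]
      calc |ζ2| ≤ M * κv ^ i * l := hz2
        _ = κv ^ i * (M * l) := by ring
    have key3 : (κv ^ i)⁻¹ * |ζ3| ≤ M * l := by
      rw [inv_mul_le_iff₀ hκvi]
      calc |ζ3| ≤ M * κv ^ i * l := hz3
        _ = κv ^ i * (M * l) := by ring
    constructor
    · rw [hb1, abs_div, abs_neg]
      have hnum1 : |κv ^ (-(i:ℤ)) * ζ2 + l / 2| ≤ (M + 1/2) * l := by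
        calc |κv ^ (-(i:ℤ)) * ζ2 + l / 2| ≤ |κv ^ (-(i:ℤ)) * ζ2| + |l / 2| :=
              abs_add_le _ _
          _ = (κv ^ i)⁻¹ * |ζ2| + l / 2 := by
              rw [ev1, abs_mul, abs_of_pos (inv_pos.mpr hκvi),
                abs_of_pos (by linarith : (0:ℝ) < l / 2)]
          _ ≤ M * l + l / 2 := by linarith
          _ = (M + 1/2) * l := by ring
      exact div_le_div_of_nonneg_right hnum1 hl2.le |>.trans_eq rfl
    · rw [hb2, abs_div, abs_mul]
      have hnum : |κv ^ (-(i:ℤ)) * (ζ2 * lam3 - lam2 * ζ3) + l / 2 * (lam3 - lam2)| ≤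
          (M + 1/2) * l * (|lam2| + |lam3|) := by
        have e1 : |ζ2 * lam3 - lam2 * ζ3| ≤ |ζ2| * |lam3| + |lam2| * |ζ3| := by
          calc |ζ2 * lam3 - lam2 * ζ3| ≤ |ζ2 * lam3| + |lam2 * ζ3| := abs_sub _ _
            _ = |ζ2| * |lam3| + |lam2| * |ζ3| := by rw [abs_mul, abs_mul]
        have e2 : |lam3 - lam2| ≤ |lam2| + |lam3| := by
          calc |lam3 - lam2| ≤ |lam3| + |lam2| := abs_sub _ _
            _ = |lam2| + |lam3| := by ring
        calc |κv ^ (-(i:ℤ)) * (ζ2 * lam3 - lam2 * ζ3) + l / 2 * (lam3 - lam2)|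
            ≤ |κv ^ (-(i:ℤ)) * (ζ2 * lam3 - lam2 * ζ3)| + |l / 2 * (lam3 - lam2)| :=
              abs_add_le _ _
          _ = (κv ^ i)⁻¹ * |ζ2 * lam3 - lam2 * ζ3| + l / 2 * |lam3 - lam2| := by
              rw [ev1, abs_mul, abs_mul, abs_of_pos (inv_pos.mpr hκvi),
                abs_of_pos (by linarith : (0:ℝ) < l / 2)]
          _ ≤ (κv ^ i)⁻¹ * (|ζ2| * |lam3| + |lam2| * |ζ3|) + l / 2 * (|lam2| + |lam3|) := by
              gcongr <;> first | positivity | exact e1 | exact e2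
          _ ≤ M * l * (|lam2| + |lam3|) + l / 2 * (|lam2| + |lam3|) := by
              have h2' : (κv ^ i)⁻¹ * (|ζ2| * |lam3|) ≤ M * l * |lam3| := by
                have h := mul_le_mul_of_nonneg_right key2 (abs_nonneg lam3)
                linarith [h, mul_assoc ((κv ^ i)⁻¹) |ζ2| |lam3|]
              have h3' : (κv ^ i)⁻¹ * (|lam2| * |ζ3|) ≤ M * l * |lam2| := by
                have h := mul_le_mul_of_nonneg_right key3 (abs_nonneg lam2)
                calc (κv ^ i)⁻¹ * (|lam2| * |ζ3|) = (κv ^ i)⁻¹ * |ζ3| * |lam2| := by ring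
                  _ ≤ M * l * |lam2| := h
              linarith [mul_add ((κv ^ i)⁻¹) (|ζ2| * |lam3|) (|lam2| * |ζ3|)]
          _ = (M + 1/2) * l * (|lam2| + |lam3|) := by ring
      exact div_le_div_of_nonneg_right hnum (mul_pos hl2 hx3).le |>.trans_eq rfl
end

section
/- Let m ≥ 1 be a real number and let a_v, a_e, a_ev be real numbers with 0 < a_ev ≤ a_v ≤ m and a_ev ≤ a_e. Define κ_v = 2^{−m/a_v}, κ_ev = 2^{−m/a_ev}, and a_V = (m + 1)·(1 − a_ev/a_v) + a_ev. Then for every natural number i, every real t with 0 ≤ t ≤ m + 1, and every real ρ with κ_ev^i ≤ ρ ≤ κ_v^i, one has 2^{i·m} · κ_v^{i·t} · κ_ev^{i·a_e} ≤ ρ^{t − a_V + a_e}. -/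
open Real

/-- The combined case analysis inside Theorem 4.14: with
`κ_v = 2^{−m/a_v}`, `κ_ev = 2^{−m/a_ev}`, and
`a_V = (m+1)(1 − a_ev/a_v) + a_ev`, for every refinement level `i`, every
`t ∈ [0, m+1]` and every `ρ` with `κ_ev^i ≤ ρ ≤ κ_v^i`, one has
`2^{im} κ_v^{it} κ_ev^{i a_e} ≤ ρ^{t − a_V + a_e}` (real powers). -/
theorem stmt_5 (m av ae aev : ℝ) (hm : 1 ≤ m)
    (haev : 0 < aev) (haevv : aev ≤ av) (havm : av ≤ m) (haeve : aev ≤ ae)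
    (κv κev aV : ℝ)
    (hκv : κv = (2 : ℝ) ^ (-(m / av)))
    (hκev : κev = (2 : ℝ) ^ (-(m / aev)))
    (haV : aV = (m + 1) * (1 - aev / av) + aev) :
    ∀ (i : ℕ) (t : ℝ), 0 ≤ t → t ≤ m + 1 →
      ∀ ρ : ℝ, κev ^ (i : ℝ) ≤ ρ → ρ ≤ κv ^ (i : ℝ) →
        (2 : ℝ) ^ ((i : ℝ) * m) * κv ^ ((i : ℝ) * t) * κev ^ ((i : ℝ) * ae) ≤
          ρ ^ (t - aV + ae) := by
  intro i t ht0 ht1 ρ hρ1 hρ2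
  have hav : 0 < av := lt_of_lt_of_le haev haevv
  have hm0 : (0 : ℝ) < m := lt_of_lt_of_le one_pos hm
  set n : ℝ := (i : ℝ) with hn
  have hn0 : (0 : ℝ) ≤ n := Nat.cast_nonneg i
  have h2 : (0 : ℝ) ≤ 2 := by norm_num
  have hκevn : κev ^ n = (2 : ℝ) ^ (-(m / aev) * n) := by
    rw [hκev, ← Real.rpow_mul h2]
  have hκvn : κv ^ n = (2 : ℝ) ^ (-(m / av) * n) := by
    rw [hκv, ← Real.rpow_mul h2]
  have hρ0 : (0 : ℝ) < ρ := lt_of_lt_of_le (by rw [hκevn]; positivity) hρ1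
  have hLHS : (2 : ℝ) ^ (n * m) * κv ^ (n * t) * κev ^ (n * ae)
      = (2 : ℝ) ^ (n * m + -(m / av) * (n * t) + -(m / aev) * (n * ae)) := by
    rw [hκv, hκev, ← Real.rpow_mul h2, ← Real.rpow_mul h2,
      ← Real.rpow_add (by norm_num), ← Real.rpow_add (by norm_num)]
  rw [hLHS]
  set s : ℝ := t - aV + ae with hs
  rcases le_or_gt 0 s with hs0 | hs0
  · -- s ≥ 0 : bound ρ^s from below by (κev^n)^s
    have h1 : (κev ^ n) ^ s ≤ ρ ^ s :=
      Real.rpow_le_rpow (by rw [hκevn]; positivity) hρ1 hs0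
    refine le_trans ?_ h1
    rw [hκevn, ← Real.rpow_mul h2]
    apply Real.rpow_le_rpow_left_iff (by norm_num : (1:ℝ) < 2) |>.mpr
    rw [← sub_nonneg]
    have key : -(m / aev) * n * s - (n * m + -(m / av) * (n * t) + -(m / aev) * (n * ae))
        = n * m * ((m + 1) - t) * (av - aev) / (av * aev) := by
      rw [hs, haV]
      field_simp
      ring
    rw [key]
    apply div_nonneg _ (by positivity)
    have h3 : 0 ≤ (m + 1) - t := by linarith
    have h4 : 0 ≤ av - aev := by linarith
    positivity
  · -- s < 0 : bound ρ^s from below by (κv^n)^s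
    have h1 : (κv ^ n) ^ s ≤ ρ ^ s :=
      Real.rpow_le_rpow_of_nonpos hρ0 hρ2 (le_of_lt hs0)
    refine le_trans ?_ h1
    rw [hκvn, ← Real.rpow_mul h2]
    apply Real.rpow_le_rpow_left_iff (by norm_num : (1:ℝ) < 2) |>.mpr
    rw [← sub_nonneg]
    have key : -(m / av) * n * s - (n * m + -(m / av) * (n * t) + -(m / aev) * (n * ae))
        = n * m * (av - aev) * (aev * ((m + 1) - av) + ae * av) / (av ^ 2 * aev) := by
      rw [hs, haV]
      field_simp
      ring
    rw [key]
    apply div_nonneg _ (by positivity)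
    have h4 : 0 ≤ av - aev := by linarith
    have h5 : 0 ≤ aev * ((m + 1) - av) + ae * av := by nlinarith
    positivity
end

section
/- Let m ≥ 1 be a real number and let a_v, a_e, a_ev be real numbers with 0 < a_ev ≤ a_v ≤ m and a_ev ≤ a_e. Define κ_v = 2^{−m/a_v}, κ_ev = 2^{−m/a_ev}, and a_V = (m + 1)·(1 − a_ev/a_v) + a_ev. Then for every natural number n, every real t with 0 ≤ t ≤ m + 1, and all positive reals ρ and ρ̂ with κ_ev^n · ρ̂ ≤ ρ ≤ κ_v^n · ρ̂, one has 2^{n·m} · κ_v^{n·t} · κ_ev^{n·a_e} · ρ̂^{t − a_V + a_e} ≤ ρ^{t − a_V + a_e}. -/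
open Real

/-- The combined case analysis (eqns (rhov1)–(rhov3)) inside Corollary 4.16:
with `κ_v = 2^{−m/a_v}`, `κ_ev = 2^{−m/a_ev}`, and
`a_V = (m+1)(1 − a_ev/a_v) + a_ev`, for every refinement level `n`, every
`t ∈ [0, m+1]` and all positive reals `ρ`, `ρ̂` with
`κ_ev^n·ρ̂ ≤ ρ ≤ κ_v^n·ρ̂`, one has
`2^{nm} κ_v^{nt} κ_ev^{n a_e} ρ̂^{t − a_V + a_e} ≤ ρ^{t − a_V + a_e}` (real powers). -/
theorem stmt_6 (m av ae aev : ℝ) (hm : 1 ≤ m)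
    (haev : 0 < aev) (haevv : aev ≤ av) (havm : av ≤ m) (haeve : aev ≤ ae)
    (κv κev aV : ℝ)
    (hκv : κv = (2 : ℝ) ^ (-(m / av)))
    (hκev : κev = (2 : ℝ) ^ (-(m / aev)))
    (haV : aV = (m + 1) * (1 - aev / av) + aev) :
    ∀ (n : ℕ) (t : ℝ), 0 ≤ t → t ≤ m + 1 →
      ∀ ρ ρh : ℝ, 0 < ρ → 0 < ρh →
        κev ^ (n : ℝ) * ρh ≤ ρ → ρ ≤ κv ^ (n : ℝ) * ρh →
        (2 : ℝ) ^ ((n : ℝ) * m) * κv ^ ((n : ℝ) * t) * κev ^ ((n : ℝ) * ae) *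
          ρh ^ (t - aV + ae) ≤ ρ ^ (t - aV + ae) := by
  intro n t ht0 ht1 ρ ρh hρ hρh hlow hhigh
  have hav : 0 < av := lt_of_lt_of_le haev haevv
  have hm0 : (0:ℝ) < m := lt_of_lt_of_le one_pos hm
  set s : ℝ := t - aV + ae with hs
  have h2 : (1:ℝ) < 2 := one_lt_two
  have hκvpos : (0:ℝ) < κv := by rw [hκv]; positivity
  have hκevpos : (0:ℝ) < κev := by rw [hκev]; positivity
  have hκvp : κv ^ ((n:ℝ) * t) = (2:ℝ) ^ (-(m / av) * ((n:ℝ) * t)) := by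
    rw [hκv, ← Real.rpow_mul (by norm_num)]
  have hκevp : κev ^ ((n:ℝ) * ae) = (2:ℝ) ^ (-(m / aev) * ((n:ℝ) * ae)) := by
    rw [hκev, ← Real.rpow_mul (by norm_num)]
  rcases le_or_gt 0 s with hsn | hsn
  · -- nonnegative exponent: use lower bound on ρ
    have hb : (κev ^ (n:ℝ) * ρh) ^ s ≤ ρ ^ s :=
      Real.rpow_le_rpow (by positivity) hlow hsn
    have hsplit : (κev ^ (n:ℝ) * ρh) ^ s = κev ^ ((n:ℝ) * s) * ρh ^ s := by
      rw [Real.mul_rpow (Real.rpow_nonneg hκevpos.le _) hρh.le,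
        ← Real.rpow_mul hκevpos.le]
    have hcoef : (2:ℝ) ^ ((n:ℝ) * m) * κv ^ ((n:ℝ) * t) * κev ^ ((n:ℝ) * ae)
        ≤ κev ^ ((n:ℝ) * s) := by
      rw [hκvp, hκevp, hκev, ← Real.rpow_mul (by norm_num : (0:ℝ) ≤ 2),
        ← Real.rpow_add (by norm_num : (0:ℝ) < 2),
        ← Real.rpow_add (by norm_num : (0:ℝ) < 2)]
      apply (Real.rpow_le_rpow_left_iff h2).mpr
      have key : m + -(m / av) * t + -(m / aev) * ae ≤ -(m / aev) * s := by
        rw [hs, haV, ← sub_nonneg]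
        have e : -(m / aev) * (t - ((m + 1) * (1 - aev / av) + aev) + ae)
            - (m + -(m / av) * t + -(m / aev) * ae)
            = (m / (av * aev)) * ((m + 1 - t) * (av - aev)) := by field_simp; ring
        rw [e]
        exact mul_nonneg (by positivity) (mul_nonneg (by linarith) (by linarith))
      have hn := mul_le_mul_of_nonneg_left key (Nat.cast_nonneg (α := ℝ) n)
      ring_nf at hn ⊢
      linarith [hn]
    calc (2:ℝ) ^ ((n:ℝ) * m) * κv ^ ((n:ℝ) * t) * κev ^ ((n:ℝ) * ae) * ρh ^ s
        ≤ κev ^ ((n:ℝ) * s) * ρh ^ s :=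
          mul_le_mul_of_nonneg_right hcoef (Real.rpow_nonneg hρh.le _)
      _ = (κev ^ (n:ℝ) * ρh) ^ s := hsplit.symm
      _ ≤ ρ ^ s := hb
  · -- negative exponent: use upper bound on ρ
    have hb : (κv ^ (n:ℝ) * ρh) ^ s ≤ ρ ^ s :=
      Real.rpow_le_rpow_of_nonpos hρ hhigh hsn.le
    have hsplit : (κv ^ (n:ℝ) * ρh) ^ s = κv ^ ((n:ℝ) * s) * ρh ^ s := by
      rw [Real.mul_rpow (Real.rpow_nonneg hκvpos.le _) hρh.le,
        ← Real.rpow_mul hκvpos.le]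
    have hcoef : (2:ℝ) ^ ((n:ℝ) * m) * κv ^ ((n:ℝ) * t) * κev ^ ((n:ℝ) * ae)
        ≤ κv ^ ((n:ℝ) * s) := by
      rw [hκvp, hκevp, hκv, ← Real.rpow_mul (by norm_num : (0:ℝ) ≤ 2),
        ← Real.rpow_add (by norm_num : (0:ℝ) < 2),
        ← Real.rpow_add (by norm_num : (0:ℝ) < 2)]
      apply (Real.rpow_le_rpow_left_iff h2).mpr
      have key : m + -(m / av) * t + -(m / aev) * ae ≤ -(m / av) * s := by
        rw [hs, haV, ← sub_nonneg]
        have e : -(m / av) * (t - ((m + 1) * (1 - aev / av) + aev) + ae)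
            - (m + -(m / av) * t + -(m / aev) * ae)
            = (m / (av ^ 2 * aev)) * ((av - aev) * ((m + 1) * aev + (ae - aev) * av)) := by
          field_simp; ring
        rw [e]
        exact mul_nonneg (by positivity) (mul_nonneg (by linarith)
          (by nlinarith [mul_nonneg (sub_nonneg.2 haeve) hav.le]))
      have hn := mul_le_mul_of_nonneg_left key (Nat.cast_nonneg (α := ℝ) n)
      ring_nf at hn ⊢
      linarith [hn]
    calc (2:ℝ) ^ ((n:ℝ) * m) * κv ^ ((n:ℝ) * t) * κev ^ ((n:ℝ) * ae) * ρh ^ s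
        ≤ κv ^ ((n:ℝ) * s) * ρh ^ s :=
          mul_le_mul_of_nonneg_right hcoef (Real.rpow_nonneg hρh.le _)
      _ = (κv ^ (n:ℝ) * ρh) ^ s := hsplit.symm
      _ ≤ ρ ^ s := hb
end

section
/- Let x0, x1, x2, x3 ∈ ℝ³ be affinely independent points, and for 0 ≤ k < l ≤ 3 let x_{kl} = (x_k + x_l)/2 be the edge midpoints. Consider the eight tetrahedra given as convex hulls of the vertex sets {x0, x01, x02, x03}, {x1, x01, x12, x13}, {x2, x02, x12, x23}, {x3, x03, x13, x23}, {x01, x02, x03, x13}, {x01, x02, x12, x13}, {x02, x03, x13, x23}, {x02, x12, x13, x23}. Then the union of these eight tetrahedra equals the convex hull of {x0, x1, x2, x3}, and their interiors are pairwise disjoint. -/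
open Set

lemma mem_hull4 {E : Type*} [AddCommGroup E] [Module ℝ E] {p q r s : E} {α β γ δ : ℝ}
    (hα : 0 ≤ α) (hβ : 0 ≤ β) (hγ : 0 ≤ γ) (hδ : 0 ≤ δ) (hsum : α + β + γ + δ = 1) :
    α • p + β • q + γ • r + δ • s ∈ convexHull ℝ ({p, q, r, s} : Set E) := by
  have h := Finset.centerMass_mem_convexHull (Finset.univ : Finset (Fin 4))
    (w := ![α, β, γ, δ]) (z := ![p, q, r, s]) (s := {p, q, r, s}) ?_ ?_ ?_
  · simpa [Finset.centerMass, Fin.sum_univ_four, hsum] using h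
  · intro i _; fin_cases i <;> simpa
  · simp [Fin.sum_univ_four, hsum]
  · intro i _; fin_cases i <;> simp [Set.mem_insert_iff]

lemma lin_ne {E : Type*} [AddCommGroup E] [Module ℝ E] (f : E →ᵃ[ℝ] ℝ) {p q : E}
    (h1 : f p = 1) (h0 : f q = 0) : f.linear ≠ 0 := by
  intro hz
  have : f p = f.linear (p - q) + f q := by
    simpa [vadd_eq_add, sub_add_cancel] using f.map_vadd q (p - q)
  rw [hz, h1, h0] at this; simpa using this

lemma mid_eval (f : (Fin 3 → ℝ) →ᵃ[ℝ] ℝ) {u v m : Fin 3 → ℝ} (h : m = (u + v) / 2) :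
    f m = (f u + f v) / 2 := by
  have hm : m = midpoint ℝ u v := by
    rw [h, midpoint_eq_smul_add]; funext i; simp [Pi.smul_apply]; ring
  rw [hm, f.map_midpoint, midpoint_eq_smul_add]
  simp [smul_eq_mul]; ring

lemma interior_subset_pos {E : Type*} [NormedAddCommGroup E] [NormedSpace ℝ E]
    {f : E →ᵃ[ℝ] ℝ} {S : Set E} (hS : S ⊆ {x | 0 ≤ f x}) (hf : f.linear ≠ 0) :
    interior S ⊆ {x | 0 < f x} := by
  intro x hx
  obtain ⟨v, hv⟩ : ∃ v, f.linear v ≠ 0 := by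
    by_contra h; push_neg at h; exact hf (LinearMap.ext fun v => h v)
  obtain ⟨w, hw⟩ : ∃ w, f.linear w < 0 := by
    rcases lt_or_gt_of_ne hv with h | h
    · exact ⟨v, h⟩
    · exact ⟨-v, by simpa using neg_neg_iff_pos.2 h⟩
  obtain ⟨ε, hε, hball⟩ := Metric.isOpen_iff.1 isOpen_interior x hx
  set t : ℝ := ε / (2 * (‖w‖ + 1)) with ht
  have hwn : (0:ℝ) < ‖w‖ + 1 := by positivity
  have htpos : 0 < t := by positivity
  have hmem : x + t • w ∈ S := by
    apply interior_subset; apply hball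
    have hd : dist (x + t • w) x = t * ‖w‖ := by
      simp [dist_eq_norm, norm_smul, abs_of_pos htpos]
    rw [Metric.mem_ball, hd]
    have h1 : t * ‖w‖ < t * (‖w‖ + 1) := by nlinarith
    have h2 : t * (‖w‖ + 1) = ε / 2 := by rw [ht]; field_simp
    linarith
  have hval : f (x + t • w) = t * f.linear w + f x := by
    have := f.map_vadd x (t • w)
    simpa [vadd_eq_add, smul_eq_mul, add_comm] using this
  have h0 : 0 ≤ f (x + t • w) := hS hmem
  have h3 : 0 < t * (-(f.linear w)) := mul_pos htpos (by linarith)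
  show 0 < f x
  nlinarith

lemma hull_nn {f : (Fin 3 → ℝ) →ᵃ[ℝ] ℝ} {v1 v2 v3 v4 : Fin 3 → ℝ}
    (h1 : 0 ≤ f v1) (h2 : 0 ≤ f v2) (h3 : 0 ≤ f v3) (h4 : 0 ≤ f v4) :
    convexHull ℝ ({v1, v2, v3, v4} : Set (Fin 3 → ℝ)) ⊆ {x | 0 ≤ f x} := by
  apply convexHull_min ?_ ((convex_Ici (0:ℝ)).affine_preimage _)
  intro y hy
  simp only [Set.mem_insert_iff, Set.mem_singleton_iff] at hy
  rcases hy with rfl | rfl | rfl | rfl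
  exacts [h1, h2, h3, h4]

lemma tet_pos {f : (Fin 3 → ℝ) →ᵃ[ℝ] ℝ} {v1 v2 v3 v4 : Fin 3 → ℝ}
    (h1 : 0 ≤ f v1) (h2 : 0 ≤ f v2) (h3 : 0 ≤ f v3) (h4 : 0 ≤ f v4)
    (hne : f.linear ≠ 0) :
    interior (convexHull ℝ ({v1, v2, v3, v4} : Set (Fin 3 → ℝ))) ⊆ {x | 0 < f x} :=
  interior_subset_pos (hull_nn h1 h2 h3 h4) hne

set_option maxHeartbeats 4000000 in
/-- One step of the uniform (o-tetrahedron) refinement of Algorithm 3.2: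
cutting a nondegenerate tetrahedron `conv{x0, x1, x2, x3}` by the midpoint
triangles at the four corners and splitting the remaining octahedron along the
diagonal `x02–x13` yields eight sub-tetrahedra whose union is the original
tetrahedron and whose interiors are pairwise disjoint. -/
theorem stmt_9 (x0 x1 x2 x3 : Fin 3 → ℝ)
    (hind : AffineIndependent ℝ ![x0, x1, x2, x3])
    (x01 x02 x03 x12 x13 x23 : Fin 3 → ℝ)
    (h01 : x01 = (x0 + x1) / 2) (h02 : x02 = (x0 + x2) / 2)
    (h03 : x03 = (x0 + x3) / 2) (h12 : x12 = (x1 + x2) / 2)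
    (h13 : x13 = (x1 + x3) / 2) (h23 : x23 = (x2 + x3) / 2)
    (T : Fin 8 → Set (Fin 3 → ℝ))
    (hT : T = ![convexHull ℝ {x0, x01, x02, x03}, convexHull ℝ {x1, x01, x12, x13},
                convexHull ℝ {x2, x02, x12, x23}, convexHull ℝ {x3, x03, x13, x23},
                convexHull ℝ {x01, x02, x03, x13}, convexHull ℝ {x01, x02, x12, x13},
                convexHull ℝ {x02, x03, x13, x23}, convexHull ℝ {x02, x12, x13, x23}]) :
    (⋃ i, T i) = convexHull ℝ {x0, x1, x2, x3} ∧
    ∀ i j, i ≠ j → Disjoint (interior (T i)) (interior (T j)) := by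
  have htot : affineSpan ℝ (Set.range ![x0, x1, x2, x3]) = ⊤ := by
    rw [hind.affineSpan_eq_top_iff_card_eq_finrank_add_one]
    simp [Module.finrank_fin_fun]
  let b : AffineBasis (Fin 4) ℝ (Fin 3 → ℝ) := ⟨![x0, x1, x2, x3], hind, htot⟩
  have hb : ∀ j : Fin 4, (b : Fin 4 → (Fin 3 → ℝ)) j = ![x0, x1, x2, x3] j := fun j => rfl
  have hcoord : ∀ i j : Fin 4, b.coord i (![x0, x1, x2, x3] j) = if i = j then 1 else 0 := by
    intro i j; rw [← hb j]; exact b.coord_apply i j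
  set A : (Fin 3 → ℝ) →ᵃ[ℝ] ℝ := b.coord 0 with hA
  set B : (Fin 3 → ℝ) →ᵃ[ℝ] ℝ := b.coord 1 with hB
  set C : (Fin 3 → ℝ) →ᵃ[ℝ] ℝ := b.coord 2 with hC
  set D : (Fin 3 → ℝ) →ᵃ[ℝ] ℝ := b.coord 3 with hD
  have e0_x0 : A x0 = 1 := by rw [hA]; simpa using hcoord 0 0
  have e0_x1 : A x1 = 0 := by rw [hA]; simpa using hcoord 0 1
  have e0_x2 : A x2 = 0 := by rw [hA]; simpa using hcoord 0 2
  have e0_x3 : A x3 = 0 := by rw [hA]; simpa using hcoord 0 3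
  have e1_x0 : B x0 = 0 := by rw [hB]; simpa using hcoord 1 0
  have e1_x1 : B x1 = 1 := by rw [hB]; simpa using hcoord 1 1
  have e1_x2 : B x2 = 0 := by rw [hB]; simpa using hcoord 1 2
  have e1_x3 : B x3 = 0 := by rw [hB]; simpa using hcoord 1 3
  have e2_x0 : C x0 = 0 := by rw [hC]; simpa using hcoord 2 0
  have e2_x1 : C x1 = 0 := by rw [hC]; simpa using hcoord 2 1
  have e2_x2 : C x2 = 1 := by rw [hC]; simpa using hcoord 2 2
  have e2_x3 : C x3 = 0 := by rw [hC]; simpa using hcoord 2 3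
  have e3_x0 : D x0 = 0 := by rw [hD]; simpa using hcoord 3 0
  have e3_x1 : D x1 = 0 := by rw [hD]; simpa using hcoord 3 1
  have e3_x2 : D x2 = 0 := by rw [hD]; simpa using hcoord 3 2
  have e3_x3 : D x3 = 1 := by rw [hD]; simpa using hcoord 3 3
  have e0_x01 : A x01 = 1/2 := by rw [mid_eval A h01, e0_x0, e0_x1]; norm_num
  have e0_x02 : A x02 = 1/2 := by rw [mid_eval A h02, e0_x0, e0_x2]; norm_num
  have e0_x03 : A x03 = 1/2 := by rw [mid_eval A h03, e0_x0, e0_x3]; norm_num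
  have e0_x12 : A x12 = 0 := by rw [mid_eval A h12, e0_x1, e0_x2]; norm_num
  have e0_x13 : A x13 = 0 := by rw [mid_eval A h13, e0_x1, e0_x3]; norm_num
  have e0_x23 : A x23 = 0 := by rw [mid_eval A h23, e0_x2, e0_x3]; norm_num
  have e1_x01 : B x01 = 1/2 := by rw [mid_eval B h01, e1_x0, e1_x1]; norm_num
  have e1_x02 : B x02 = 0 := by rw [mid_eval B h02, e1_x0, e1_x2]; norm_num
  have e1_x03 : B x03 = 0 := by rw [mid_eval B h03, e1_x0, e1_x3]; norm_num
  have e1_x12 : B x12 = 1/2 := by rw [mid_eval B h12, e1_x1, e1_x2]; norm_num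
  have e1_x13 : B x13 = 1/2 := by rw [mid_eval B h13, e1_x1, e1_x3]; norm_num
  have e1_x23 : B x23 = 0 := by rw [mid_eval B h23, e1_x2, e1_x3]; norm_num
  have e2_x01 : C x01 = 0 := by rw [mid_eval C h01, e2_x0, e2_x1]; norm_num
  have e2_x02 : C x02 = 1/2 := by rw [mid_eval C h02, e2_x0, e2_x2]; norm_num
  have e2_x03 : C x03 = 0 := by rw [mid_eval C h03, e2_x0, e2_x3]; norm_num
  have e2_x12 : C x12 = 1/2 := by rw [mid_eval C h12, e2_x1, e2_x2]; norm_num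
  have e2_x13 : C x13 = 0 := by rw [mid_eval C h13, e2_x1, e2_x3]; norm_num
  have e2_x23 : C x23 = 1/2 := by rw [mid_eval C h23, e2_x2, e2_x3]; norm_num
  have e3_x01 : D x01 = 0 := by rw [mid_eval D h01, e3_x0, e3_x1]; norm_num
  have e3_x02 : D x02 = 0 := by rw [mid_eval D h02, e3_x0, e3_x2]; norm_num
  have e3_x03 : D x03 = 1/2 := by rw [mid_eval D h03, e3_x0, e3_x3]; norm_num
  have e3_x12 : D x12 = 0 := by rw [mid_eval D h12, e3_x1, e3_x2]; norm_num
  have e3_x13 : D x13 = 1/2 := by rw [mid_eval D h13, e3_x1, e3_x3]; norm_num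
  have e3_x23 : D x23 = 1/2 := by rw [mid_eval D h23, e3_x2, e3_x3]; norm_num
  have hsum : ∀ y, A y + B y + C y + D y = 1 := by
    intro y
    have h := b.sum_coord_apply_eq_one y
    rw [Fin.sum_univ_four] at h
    rw [hA, hB, hC, hD]; exact h
  have hrep : ∀ y, y = A y • x0 + B y • x1 + C y • x2 + D y • x3 := by
    intro y
    have h := b.linear_combination_coord_eq_self y
    rw [Fin.sum_univ_four] at h
    rw [hA, hB, hC, hD]
    have hb0 : (b : Fin 4 → (Fin 3 → ℝ)) 0 = x0 := rfl
    have hb1 : (b : Fin 4 → (Fin 3 → ℝ)) 1 = x1 := rfl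
    have hb2 : (b : Fin 4 → (Fin 3 → ℝ)) 2 = x2 := rfl
    have hb3 : (b : Fin 4 → (Fin 3 → ℝ)) 3 = x3 := rfl
    rw [hb0, hb1, hb2, hb3] at h
    exact h.symm
  set F : ℝ → ℝ → ℝ → ℝ → ℝ → ((Fin 3 → ℝ) →ᵃ[ℝ] ℝ) :=
    fun c0 c1 c2 c3 t => c0 • A + c1 • B + c2 • C + c3 • D + AffineMap.const ℝ (Fin 3 → ℝ) t
    with hF
  have Feval : ∀ c0 c1 c2 c3 t y, F c0 c1 c2 c3 t y
      = c0 * A y + c1 * B y + c2 * C y + c3 * D y + t := by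
    intro c0 c1 c2 c3 t y; rw [hF]; simp [smul_eq_mul]
  have hm01 : x01 = (2⁻¹:ℝ) • x0 + (2⁻¹:ℝ) • x1 := by rw [h01]; funext i; simp [Pi.smul_apply]; ring
  have hm02 : x02 = (2⁻¹:ℝ) • x0 + (2⁻¹:ℝ) • x2 := by rw [h02]; funext i; simp [Pi.smul_apply]; ring
  have hm03 : x03 = (2⁻¹:ℝ) • x0 + (2⁻¹:ℝ) • x3 := by rw [h03]; funext i; simp [Pi.smul_apply]; ring
  have hm12 : x12 = (2⁻¹:ℝ) • x1 + (2⁻¹:ℝ) • x2 := by rw [h12]; funext i; simp [Pi.smul_apply]; ring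
  have hm13 : x13 = (2⁻¹:ℝ) • x1 + (2⁻¹:ℝ) • x3 := by rw [h13]; funext i; simp [Pi.smul_apply]; ring
  have hm23 : x23 = (2⁻¹:ℝ) • x2 + (2⁻¹:ℝ) • x3 := by rw [h23]; funext i; simp [Pi.smul_apply]; ring
  have hT0 : T 0 = convexHull ℝ ({x0, x01, x02, x03} : Set (Fin 3 → ℝ)) := by rw [hT]; rfl
  have hT1 : T 1 = convexHull ℝ ({x1, x01, x12, x13} : Set (Fin 3 → ℝ)) := by rw [hT]; rfl
  have hT2 : T 2 = convexHull ℝ ({x2, x02, x12, x23} : Set (Fin 3 → ℝ)) := by rw [hT]; rfl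
  have hT3 : T 3 = convexHull ℝ ({x3, x03, x13, x23} : Set (Fin 3 → ℝ)) := by rw [hT]; rfl
  have hT4 : T 4 = convexHull ℝ ({x01, x02, x03, x13} : Set (Fin 3 → ℝ)) := by rw [hT]; rfl
  have hT5 : T 5 = convexHull ℝ ({x01, x02, x12, x13} : Set (Fin 3 → ℝ)) := by rw [hT]; rfl
  have hT6 : T 6 = convexHull ℝ ({x02, x03, x13, x23} : Set (Fin 3 → ℝ)) := by rw [hT]; rfl
  have hT7 : T 7 = convexHull ℝ ({x02, x12, x13, x23} : Set (Fin 3 → ℝ)) := by rw [hT]; rfl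
  have E0_0_0 : F 2 0 0 0 (-1) x0 = 1 := by rw [Feval, e0_x0, e1_x0, e2_x0, e3_x0]; norm_num
  have E0_0_1 : F 2 0 0 0 (-1) x01 = 0 := by rw [Feval, e0_x01, e1_x01, e2_x01, e3_x01]; norm_num
  have E0_0_2 : F 2 0 0 0 (-1) x02 = 0 := by rw [Feval, e0_x02, e1_x02, e2_x02, e3_x02]; norm_num
  have E0_0_3 : F 2 0 0 0 (-1) x03 = 0 := by rw [Feval, e0_x03, e1_x03, e2_x03, e3_x03]; norm_num
  have I0_0 : ∀ y, y ∈ interior (T 0) → 0 < 2 * A y + 0 * B y + 0 * C y + 0 * D y + (-1) := by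
    intro y hy
    rw [hT0] at hy
    have h := tet_pos (by rw [E0_0_0]; norm_num) (le_of_eq (E0_0_1).symm) (le_of_eq (E0_0_2).symm) (le_of_eq (E0_0_3).symm) (lin_ne _ E0_0_0 E0_0_1) hy
    simpa only [Set.mem_setOf_eq, Feval] using h
  have E0_1_0 : F 0 2 0 0 0 x0 = 0 := by rw [Feval, e0_x0, e1_x0, e2_x0, e3_x0]; norm_num
  have E0_1_1 : F 0 2 0 0 0 x01 = 1 := by rw [Feval, e0_x01, e1_x01, e2_x01, e3_x01]; norm_num
  have E0_1_2 : F 0 2 0 0 0 x02 = 0 := by rw [Feval, e0_x02, e1_x02, e2_x02, e3_x02]; norm_num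
  have E0_1_3 : F 0 2 0 0 0 x03 = 0 := by rw [Feval, e0_x03, e1_x03, e2_x03, e3_x03]; norm_num
  have I0_1 : ∀ y, y ∈ interior (T 0) → 0 < 0 * A y + 2 * B y + 0 * C y + 0 * D y + 0 := by
    intro y hy
    rw [hT0] at hy
    have h := tet_pos (le_of_eq (E0_1_0).symm) (by rw [E0_1_1]; norm_num) (le_of_eq (E0_1_2).symm) (le_of_eq (E0_1_3).symm) (lin_ne _ E0_1_1 E0_1_0) hy
    simpa only [Set.mem_setOf_eq, Feval] using h
  have E0_2_0 : F 0 0 2 0 0 x0 = 0 := by rw [Feval, e0_x0, e1_x0, e2_x0, e3_x0]; norm_num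
  have E0_2_1 : F 0 0 2 0 0 x01 = 0 := by rw [Feval, e0_x01, e1_x01, e2_x01, e3_x01]; norm_num
  have E0_2_2 : F 0 0 2 0 0 x02 = 1 := by rw [Feval, e0_x02, e1_x02, e2_x02, e3_x02]; norm_num
  have E0_2_3 : F 0 0 2 0 0 x03 = 0 := by rw [Feval, e0_x03, e1_x03, e2_x03, e3_x03]; norm_num
  have I0_2 : ∀ y, y ∈ interior (T 0) → 0 < 0 * A y + 0 * B y + 2 * C y + 0 * D y + 0 := by
    intro y hy
    rw [hT0] at hy
    have h := tet_pos (le_of_eq (E0_2_0).symm) (le_of_eq (E0_2_1).symm) (by rw [E0_2_2]; norm_num) (le_of_eq (E0_2_3).symm) (lin_ne _ E0_2_2 E0_2_0) hy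
    simpa only [Set.mem_setOf_eq, Feval] using h
  have E0_3_0 : F 0 0 0 2 0 x0 = 0 := by rw [Feval, e0_x0, e1_x0, e2_x0, e3_x0]; norm_num
  have E0_3_1 : F 0 0 0 2 0 x01 = 0 := by rw [Feval, e0_x01, e1_x01, e2_x01, e3_x01]; norm_num
  have E0_3_2 : F 0 0 0 2 0 x02 = 0 := by rw [Feval, e0_x02, e1_x02, e2_x02, e3_x02]; norm_num
  have E0_3_3 : F 0 0 0 2 0 x03 = 1 := by rw [Feval, e0_x03, e1_x03, e2_x03, e3_x03]; norm_num
  have I0_3 : ∀ y, y ∈ interior (T 0) → 0 < 0 * A y + 0 * B y + 0 * C y + 2 * D y + 0 := by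
    intro y hy
    rw [hT0] at hy
    have h := tet_pos (le_of_eq (E0_3_0).symm) (le_of_eq (E0_3_1).symm) (le_of_eq (E0_3_2).symm) (by rw [E0_3_3]; norm_num) (lin_ne _ E0_3_3 E0_3_0) hy
    simpa only [Set.mem_setOf_eq, Feval] using h
  have E1_0_0 : F 0 2 0 0 (-1) x1 = 1 := by rw [Feval, e0_x1, e1_x1, e2_x1, e3_x1]; norm_num
  have E1_0_1 : F 0 2 0 0 (-1) x01 = 0 := by rw [Feval, e0_x01, e1_x01, e2_x01, e3_x01]; norm_num
  have E1_0_2 : F 0 2 0 0 (-1) x12 = 0 := by rw [Feval, e0_x12, e1_x12, e2_x12, e3_x12]; norm_num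
  have E1_0_3 : F 0 2 0 0 (-1) x13 = 0 := by rw [Feval, e0_x13, e1_x13, e2_x13, e3_x13]; norm_num
  have I1_0 : ∀ y, y ∈ interior (T 1) → 0 < 0 * A y + 2 * B y + 0 * C y + 0 * D y + (-1) := by
    intro y hy
    rw [hT1] at hy
    have h := tet_pos (by rw [E1_0_0]; norm_num) (le_of_eq (E1_0_1).symm) (le_of_eq (E1_0_2).symm) (le_of_eq (E1_0_3).symm) (lin_ne _ E1_0_0 E1_0_1) hy
    simpa only [Set.mem_setOf_eq, Feval] using h
  have E1_1_0 : F 2 0 0 0 0 x1 = 0 := by rw [Feval, e0_x1, e1_x1, e2_x1, e3_x1]; norm_num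
  have E1_1_1 : F 2 0 0 0 0 x01 = 1 := by rw [Feval, e0_x01, e1_x01, e2_x01, e3_x01]; norm_num
  have E1_1_2 : F 2 0 0 0 0 x12 = 0 := by rw [Feval, e0_x12, e1_x12, e2_x12, e3_x12]; norm_num
  have E1_1_3 : F 2 0 0 0 0 x13 = 0 := by rw [Feval, e0_x13, e1_x13, e2_x13, e3_x13]; norm_num
  have I1_1 : ∀ y, y ∈ interior (T 1) → 0 < 2 * A y + 0 * B y + 0 * C y + 0 * D y + 0 := by
    intro y hy
    rw [hT1] at hy
    have h := tet_pos (le_of_eq (E1_1_0).symm) (by rw [E1_1_1]; norm_num) (le_of_eq (E1_1_2).symm) (le_of_eq (E1_1_3).symm) (lin_ne _ E1_1_1 E1_1_0) hy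
    simpa only [Set.mem_setOf_eq, Feval] using h
  have E1_2_0 : F 0 0 2 0 0 x1 = 0 := by rw [Feval, e0_x1, e1_x1, e2_x1, e3_x1]; norm_num
  have E1_2_1 : F 0 0 2 0 0 x01 = 0 := by rw [Feval, e0_x01, e1_x01, e2_x01, e3_x01]; norm_num
  have E1_2_2 : F 0 0 2 0 0 x12 = 1 := by rw [Feval, e0_x12, e1_x12, e2_x12, e3_x12]; norm_num
  have E1_2_3 : F 0 0 2 0 0 x13 = 0 := by rw [Feval, e0_x13, e1_x13, e2_x13, e3_x13]; norm_num
  have I1_2 : ∀ y, y ∈ interior (T 1) → 0 < 0 * A y + 0 * B y + 2 * C y + 0 * D y + 0 := by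
    intro y hy
    rw [hT1] at hy
    have h := tet_pos (le_of_eq (E1_2_0).symm) (le_of_eq (E1_2_1).symm) (by rw [E1_2_2]; norm_num) (le_of_eq (E1_2_3).symm) (lin_ne _ E1_2_2 E1_2_0) hy
    simpa only [Set.mem_setOf_eq, Feval] using h
  have E1_3_0 : F 0 0 0 2 0 x1 = 0 := by rw [Feval, e0_x1, e1_x1, e2_x1, e3_x1]; norm_num
  have E1_3_1 : F 0 0 0 2 0 x01 = 0 := by rw [Feval, e0_x01, e1_x01, e2_x01, e3_x01]; norm_num
  have E1_3_2 : F 0 0 0 2 0 x12 = 0 := by rw [Feval, e0_x12, e1_x12, e2_x12, e3_x12]; norm_num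
  have E1_3_3 : F 0 0 0 2 0 x13 = 1 := by rw [Feval, e0_x13, e1_x13, e2_x13, e3_x13]; norm_num
  have I1_3 : ∀ y, y ∈ interior (T 1) → 0 < 0 * A y + 0 * B y + 0 * C y + 2 * D y + 0 := by
    intro y hy
    rw [hT1] at hy
    have h := tet_pos (le_of_eq (E1_3_0).symm) (le_of_eq (E1_3_1).symm) (le_of_eq (E1_3_2).symm) (by rw [E1_3_3]; norm_num) (lin_ne _ E1_3_3 E1_3_0) hy
    simpa only [Set.mem_setOf_eq, Feval] using h
  have E2_0_0 : F 0 0 2 0 (-1) x2 = 1 := by rw [Feval, e0_x2, e1_x2, e2_x2, e3_x2]; norm_num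
  have E2_0_1 : F 0 0 2 0 (-1) x02 = 0 := by rw [Feval, e0_x02, e1_x02, e2_x02, e3_x02]; norm_num
  have E2_0_2 : F 0 0 2 0 (-1) x12 = 0 := by rw [Feval, e0_x12, e1_x12, e2_x12, e3_x12]; norm_num
  have E2_0_3 : F 0 0 2 0 (-1) x23 = 0 := by rw [Feval, e0_x23, e1_x23, e2_x23, e3_x23]; norm_num
  have I2_0 : ∀ y, y ∈ interior (T 2) → 0 < 0 * A y + 0 * B y + 2 * C y + 0 * D y + (-1) := by
    intro y hy
    rw [hT2] at hy
    have h := tet_pos (by rw [E2_0_0]; norm_num) (le_of_eq (E2_0_1).symm) (le_of_eq (E2_0_2).symm) (le_of_eq (E2_0_3).symm) (lin_ne _ E2_0_0 E2_0_1) hy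
    simpa only [Set.mem_setOf_eq, Feval] using h
  have E2_1_0 : F 2 0 0 0 0 x2 = 0 := by rw [Feval, e0_x2, e1_x2, e2_x2, e3_x2]; norm_num
  have E2_1_1 : F 2 0 0 0 0 x02 = 1 := by rw [Feval, e0_x02, e1_x02, e2_x02, e3_x02]; norm_num
  have E2_1_2 : F 2 0 0 0 0 x12 = 0 := by rw [Feval, e0_x12, e1_x12, e2_x12, e3_x12]; norm_num
  have E2_1_3 : F 2 0 0 0 0 x23 = 0 := by rw [Feval, e0_x23, e1_x23, e2_x23, e3_x23]; norm_num
  have I2_1 : ∀ y, y ∈ interior (T 2) → 0 < 2 * A y + 0 * B y + 0 * C y + 0 * D y + 0 := by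
    intro y hy
    rw [hT2] at hy
    have h := tet_pos (le_of_eq (E2_1_0).symm) (by rw [E2_1_1]; norm_num) (le_of_eq (E2_1_2).symm) (le_of_eq (E2_1_3).symm) (lin_ne _ E2_1_1 E2_1_0) hy
    simpa only [Set.mem_setOf_eq, Feval] using h
  have E2_2_0 : F 0 2 0 0 0 x2 = 0 := by rw [Feval, e0_x2, e1_x2, e2_x2, e3_x2]; norm_num
  have E2_2_1 : F 0 2 0 0 0 x02 = 0 := by rw [Feval, e0_x02, e1_x02, e2_x02, e3_x02]; norm_num
  have E2_2_2 : F 0 2 0 0 0 x12 = 1 := by rw [Feval, e0_x12, e1_x12, e2_x12, e3_x12]; norm_num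
  have E2_2_3 : F 0 2 0 0 0 x23 = 0 := by rw [Feval, e0_x23, e1_x23, e2_x23, e3_x23]; norm_num
  have I2_2 : ∀ y, y ∈ interior (T 2) → 0 < 0 * A y + 2 * B y + 0 * C y + 0 * D y + 0 := by
    intro y hy
    rw [hT2] at hy
    have h := tet_pos (le_of_eq (E2_2_0).symm) (le_of_eq (E2_2_1).symm) (by rw [E2_2_2]; norm_num) (le_of_eq (E2_2_3).symm) (lin_ne _ E2_2_2 E2_2_0) hy
    simpa only [Set.mem_setOf_eq, Feval] using h
  have E2_3_0 : F 0 0 0 2 0 x2 = 0 := by rw [Feval, e0_x2, e1_x2, e2_x2, e3_x2]; norm_num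
  have E2_3_1 : F 0 0 0 2 0 x02 = 0 := by rw [Feval, e0_x02, e1_x02, e2_x02, e3_x02]; norm_num
  have E2_3_2 : F 0 0 0 2 0 x12 = 0 := by rw [Feval, e0_x12, e1_x12, e2_x12, e3_x12]; norm_num
  have E2_3_3 : F 0 0 0 2 0 x23 = 1 := by rw [Feval, e0_x23, e1_x23, e2_x23, e3_x23]; norm_num
  have I2_3 : ∀ y, y ∈ interior (T 2) → 0 < 0 * A y + 0 * B y + 0 * C y + 2 * D y + 0 := by
    intro y hy
    rw [hT2] at hy
    have h := tet_pos (le_of_eq (E2_3_0).symm) (le_of_eq (E2_3_1).symm) (le_of_eq (E2_3_2).symm) (by rw [E2_3_3]; norm_num) (lin_ne _ E2_3_3 E2_3_0) hy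
    simpa only [Set.mem_setOf_eq, Feval] using h
  have E3_0_0 : F 0 0 0 2 (-1) x3 = 1 := by rw [Feval, e0_x3, e1_x3, e2_x3, e3_x3]; norm_num
  have E3_0_1 : F 0 0 0 2 (-1) x03 = 0 := by rw [Feval, e0_x03, e1_x03, e2_x03, e3_x03]; norm_num
  have E3_0_2 : F 0 0 0 2 (-1) x13 = 0 := by rw [Feval, e0_x13, e1_x13, e2_x13, e3_x13]; norm_num
  have E3_0_3 : F 0 0 0 2 (-1) x23 = 0 := by rw [Feval, e0_x23, e1_x23, e2_x23, e3_x23]; norm_num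
  have I3_0 : ∀ y, y ∈ interior (T 3) → 0 < 0 * A y + 0 * B y + 0 * C y + 2 * D y + (-1) := by
    intro y hy
    rw [hT3] at hy
    have h := tet_pos (by rw [E3_0_0]; norm_num) (le_of_eq (E3_0_1).symm) (le_of_eq (E3_0_2).symm) (le_of_eq (E3_0_3).symm) (lin_ne _ E3_0_0 E3_0_1) hy
    simpa only [Set.mem_setOf_eq, Feval] using h
  have E3_1_0 : F 2 0 0 0 0 x3 = 0 := by rw [Feval, e0_x3, e1_x3, e2_x3, e3_x3]; norm_num
  have E3_1_1 : F 2 0 0 0 0 x03 = 1 := by rw [Feval, e0_x03, e1_x03, e2_x03, e3_x03]; norm_num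
  have E3_1_2 : F 2 0 0 0 0 x13 = 0 := by rw [Feval, e0_x13, e1_x13, e2_x13, e3_x13]; norm_num
  have E3_1_3 : F 2 0 0 0 0 x23 = 0 := by rw [Feval, e0_x23, e1_x23, e2_x23, e3_x23]; norm_num
  have I3_1 : ∀ y, y ∈ interior (T 3) → 0 < 2 * A y + 0 * B y + 0 * C y + 0 * D y + 0 := by
    intro y hy
    rw [hT3] at hy
    have h := tet_pos (le_of_eq (E3_1_0).symm) (by rw [E3_1_1]; norm_num) (le_of_eq (E3_1_2).symm) (le_of_eq (E3_1_3).symm) (lin_ne _ E3_1_1 E3_1_0) hy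
    simpa only [Set.mem_setOf_eq, Feval] using h
  have E3_2_0 : F 0 2 0 0 0 x3 = 0 := by rw [Feval, e0_x3, e1_x3, e2_x3, e3_x3]; norm_num
  have E3_2_1 : F 0 2 0 0 0 x03 = 0 := by rw [Feval, e0_x03, e1_x03, e2_x03, e3_x03]; norm_num
  have E3_2_2 : F 0 2 0 0 0 x13 = 1 := by rw [Feval, e0_x13, e1_x13, e2_x13, e3_x13]; norm_num
  have E3_2_3 : F 0 2 0 0 0 x23 = 0 := by rw [Feval, e0_x23, e1_x23, e2_x23, e3_x23]; norm_num
  have I3_2 : ∀ y, y ∈ interior (T 3) → 0 < 0 * A y + 2 * B y + 0 * C y + 0 * D y + 0 := by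
    intro y hy
    rw [hT3] at hy
    have h := tet_pos (le_of_eq (E3_2_0).symm) (le_of_eq (E3_2_1).symm) (by rw [E3_2_2]; norm_num) (le_of_eq (E3_2_3).symm) (lin_ne _ E3_2_2 E3_2_0) hy
    simpa only [Set.mem_setOf_eq, Feval] using h
  have E3_3_0 : F 0 0 2 0 0 x3 = 0 := by rw [Feval, e0_x3, e1_x3, e2_x3, e3_x3]; norm_num
  have E3_3_1 : F 0 0 2 0 0 x03 = 0 := by rw [Feval, e0_x03, e1_x03, e2_x03, e3_x03]; norm_num
  have E3_3_2 : F 0 0 2 0 0 x13 = 0 := by rw [Feval, e0_x13, e1_x13, e2_x13, e3_x13]; norm_num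
  have E3_3_3 : F 0 0 2 0 0 x23 = 1 := by rw [Feval, e0_x23, e1_x23, e2_x23, e3_x23]; norm_num
  have I3_3 : ∀ y, y ∈ interior (T 3) → 0 < 0 * A y + 0 * B y + 2 * C y + 0 * D y + 0 := by
    intro y hy
    rw [hT3] at hy
    have h := tet_pos (le_of_eq (E3_3_0).symm) (le_of_eq (E3_3_1).symm) (le_of_eq (E3_3_2).symm) (by rw [E3_3_3]; norm_num) (lin_ne _ E3_3_3 E3_3_0) hy
    simpa only [Set.mem_setOf_eq, Feval] using h
  have E4_0_0 : F 1 1 (-1) (-1) 0 x01 = 1 := by rw [Feval, e0_x01, e1_x01, e2_x01, e3_x01]; norm_num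
  have E4_0_1 : F 1 1 (-1) (-1) 0 x02 = 0 := by rw [Feval, e0_x02, e1_x02, e2_x02, e3_x02]; norm_num
  have E4_0_2 : F 1 1 (-1) (-1) 0 x03 = 0 := by rw [Feval, e0_x03, e1_x03, e2_x03, e3_x03]; norm_num
  have E4_0_3 : F 1 1 (-1) (-1) 0 x13 = 0 := by rw [Feval, e0_x13, e1_x13, e2_x13, e3_x13]; norm_num
  have I4_0 : ∀ y, y ∈ interior (T 4) → 0 < 1 * A y + 1 * B y + (-1) * C y + (-1) * D y + 0 := by
    intro y hy
    rw [hT4] at hy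
    have h := tet_pos (by rw [E4_0_0]; norm_num) (le_of_eq (E4_0_1).symm) (le_of_eq (E4_0_2).symm) (le_of_eq (E4_0_3).symm) (lin_ne _ E4_0_0 E4_0_1) hy
    simpa only [Set.mem_setOf_eq, Feval] using h
  have E4_1_0 : F 0 0 2 0 0 x01 = 0 := by rw [Feval, e0_x01, e1_x01, e2_x01, e3_x01]; norm_num
  have E4_1_1 : F 0 0 2 0 0 x02 = 1 := by rw [Feval, e0_x02, e1_x02, e2_x02, e3_x02]; norm_num
  have E4_1_2 : F 0 0 2 0 0 x03 = 0 := by rw [Feval, e0_x03, e1_x03, e2_x03, e3_x03]; norm_num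
  have E4_1_3 : F 0 0 2 0 0 x13 = 0 := by rw [Feval, e0_x13, e1_x13, e2_x13, e3_x13]; norm_num
  have I4_1 : ∀ y, y ∈ interior (T 4) → 0 < 0 * A y + 0 * B y + 2 * C y + 0 * D y + 0 := by
    intro y hy
    rw [hT4] at hy
    have h := tet_pos (le_of_eq (E4_1_0).symm) (by rw [E4_1_1]; norm_num) (le_of_eq (E4_1_2).symm) (le_of_eq (E4_1_3).symm) (lin_ne _ E4_1_1 E4_1_0) hy
    simpa only [Set.mem_setOf_eq, Feval] using h
  have E4_2_0 : F 1 (-1) (-1) 1 0 x01 = 0 := by rw [Feval, e0_x01, e1_x01, e2_x01, e3_x01]; norm_num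
  have E4_2_1 : F 1 (-1) (-1) 1 0 x02 = 0 := by rw [Feval, e0_x02, e1_x02, e2_x02, e3_x02]; norm_num
  have E4_2_2 : F 1 (-1) (-1) 1 0 x03 = 1 := by rw [Feval, e0_x03, e1_x03, e2_x03, e3_x03]; norm_num
  have E4_2_3 : F 1 (-1) (-1) 1 0 x13 = 0 := by rw [Feval, e0_x13, e1_x13, e2_x13, e3_x13]; norm_num
  have I4_2 : ∀ y, y ∈ interior (T 4) → 0 < 1 * A y + (-1) * B y + (-1) * C y + 1 * D y + 0 := by
    intro y hy
    rw [hT4] at hy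
    have h := tet_pos (le_of_eq (E4_2_0).symm) (le_of_eq (E4_2_1).symm) (by rw [E4_2_2]; norm_num) (le_of_eq (E4_2_3).symm) (lin_ne _ E4_2_2 E4_2_0) hy
    simpa only [Set.mem_setOf_eq, Feval] using h
  have E4_3_0 : F (-2) 0 0 0 1 x01 = 0 := by rw [Feval, e0_x01, e1_x01, e2_x01, e3_x01]; norm_num
  have E4_3_1 : F (-2) 0 0 0 1 x02 = 0 := by rw [Feval, e0_x02, e1_x02, e2_x02, e3_x02]; norm_num
  have E4_3_2 : F (-2) 0 0 0 1 x03 = 0 := by rw [Feval, e0_x03, e1_x03, e2_x03, e3_x03]; norm_num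
  have E4_3_3 : F (-2) 0 0 0 1 x13 = 1 := by rw [Feval, e0_x13, e1_x13, e2_x13, e3_x13]; norm_num
  have I4_3 : ∀ y, y ∈ interior (T 4) → 0 < (-2) * A y + 0 * B y + 0 * C y + 0 * D y + 1 := by
    intro y hy
    rw [hT4] at hy
    have h := tet_pos (le_of_eq (E4_3_0).symm) (le_of_eq (E4_3_1).symm) (le_of_eq (E4_3_2).symm) (by rw [E4_3_3]; norm_num) (lin_ne _ E4_3_3 E4_3_0) hy
    simpa only [Set.mem_setOf_eq, Feval] using h
  have E5_0_0 : F 1 1 (-1) (-1) 0 x01 = 1 := by rw [Feval, e0_x01, e1_x01, e2_x01, e3_x01]; norm_num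
  have E5_0_1 : F 1 1 (-1) (-1) 0 x02 = 0 := by rw [Feval, e0_x02, e1_x02, e2_x02, e3_x02]; norm_num
  have E5_0_2 : F 1 1 (-1) (-1) 0 x12 = 0 := by rw [Feval, e0_x12, e1_x12, e2_x12, e3_x12]; norm_num
  have E5_0_3 : F 1 1 (-1) (-1) 0 x13 = 0 := by rw [Feval, e0_x13, e1_x13, e2_x13, e3_x13]; norm_num
  have I5_0 : ∀ y, y ∈ interior (T 5) → 0 < 1 * A y + 1 * B y + (-1) * C y + (-1) * D y + 0 := by
    intro y hy
    rw [hT5] at hy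
    have h := tet_pos (by rw [E5_0_0]; norm_num) (le_of_eq (E5_0_1).symm) (le_of_eq (E5_0_2).symm) (le_of_eq (E5_0_3).symm) (lin_ne _ E5_0_0 E5_0_1) hy
    simpa only [Set.mem_setOf_eq, Feval] using h
  have E5_1_0 : F 0 (-2) 0 0 1 x01 = 0 := by rw [Feval, e0_x01, e1_x01, e2_x01, e3_x01]; norm_num
  have E5_1_1 : F 0 (-2) 0 0 1 x02 = 1 := by rw [Feval, e0_x02, e1_x02, e2_x02, e3_x02]; norm_num
  have E5_1_2 : F 0 (-2) 0 0 1 x12 = 0 := by rw [Feval, e0_x12, e1_x12, e2_x12, e3_x12]; norm_num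
  have E5_1_3 : F 0 (-2) 0 0 1 x13 = 0 := by rw [Feval, e0_x13, e1_x13, e2_x13, e3_x13]; norm_num
  have I5_1 : ∀ y, y ∈ interior (T 5) → 0 < 0 * A y + (-2) * B y + 0 * C y + 0 * D y + 1 := by
    intro y hy
    rw [hT5] at hy
    have h := tet_pos (le_of_eq (E5_1_0).symm) (by rw [E5_1_1]; norm_num) (le_of_eq (E5_1_2).symm) (le_of_eq (E5_1_3).symm) (lin_ne _ E5_1_1 E5_1_0) hy
    simpa only [Set.mem_setOf_eq, Feval] using h
  have E5_2_0 : F (-1) 1 1 (-1) 0 x01 = 0 := by rw [Feval, e0_x01, e1_x01, e2_x01, e3_x01]; norm_num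
  have E5_2_1 : F (-1) 1 1 (-1) 0 x02 = 0 := by rw [Feval, e0_x02, e1_x02, e2_x02, e3_x02]; norm_num
  have E5_2_2 : F (-1) 1 1 (-1) 0 x12 = 1 := by rw [Feval, e0_x12, e1_x12, e2_x12, e3_x12]; norm_num
  have E5_2_3 : F (-1) 1 1 (-1) 0 x13 = 0 := by rw [Feval, e0_x13, e1_x13, e2_x13, e3_x13]; norm_num
  have I5_2 : ∀ y, y ∈ interior (T 5) → 0 < (-1) * A y + 1 * B y + 1 * C y + (-1) * D y + 0 := by
    intro y hy
    rw [hT5] at hy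
    have h := tet_pos (le_of_eq (E5_2_0).symm) (le_of_eq (E5_2_1).symm) (by rw [E5_2_2]; norm_num) (le_of_eq (E5_2_3).symm) (lin_ne _ E5_2_2 E5_2_0) hy
    simpa only [Set.mem_setOf_eq, Feval] using h
  have E5_3_0 : F 0 0 0 2 0 x01 = 0 := by rw [Feval, e0_x01, e1_x01, e2_x01, e3_x01]; norm_num
  have E5_3_1 : F 0 0 0 2 0 x02 = 0 := by rw [Feval, e0_x02, e1_x02, e2_x02, e3_x02]; norm_num
  have E5_3_2 : F 0 0 0 2 0 x12 = 0 := by rw [Feval, e0_x12, e1_x12, e2_x12, e3_x12]; norm_num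
  have E5_3_3 : F 0 0 0 2 0 x13 = 1 := by rw [Feval, e0_x13, e1_x13, e2_x13, e3_x13]; norm_num
  have I5_3 : ∀ y, y ∈ interior (T 5) → 0 < 0 * A y + 0 * B y + 0 * C y + 2 * D y + 0 := by
    intro y hy
    rw [hT5] at hy
    have h := tet_pos (le_of_eq (E5_3_0).symm) (le_of_eq (E5_3_1).symm) (le_of_eq (E5_3_2).symm) (by rw [E5_3_3]; norm_num) (lin_ne _ E5_3_3 E5_3_0) hy
    simpa only [Set.mem_setOf_eq, Feval] using h
  have E6_0_0 : F 0 0 0 (-2) 1 x02 = 1 := by rw [Feval, e0_x02, e1_x02, e2_x02, e3_x02]; norm_num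
  have E6_0_1 : F 0 0 0 (-2) 1 x03 = 0 := by rw [Feval, e0_x03, e1_x03, e2_x03, e3_x03]; norm_num
  have E6_0_2 : F 0 0 0 (-2) 1 x13 = 0 := by rw [Feval, e0_x13, e1_x13, e2_x13, e3_x13]; norm_num
  have E6_0_3 : F 0 0 0 (-2) 1 x23 = 0 := by rw [Feval, e0_x23, e1_x23, e2_x23, e3_x23]; norm_num
  have I6_0 : ∀ y, y ∈ interior (T 6) → 0 < 0 * A y + 0 * B y + 0 * C y + (-2) * D y + 1 := by
    intro y hy
    rw [hT6] at hy
    have h := tet_pos (by rw [E6_0_0]; norm_num) (le_of_eq (E6_0_1).symm) (le_of_eq (E6_0_2).symm) (le_of_eq (E6_0_3).symm) (lin_ne _ E6_0_0 E6_0_1) hy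
    simpa only [Set.mem_setOf_eq, Feval] using h
  have E6_1_0 : F 1 (-1) (-1) 1 0 x02 = 0 := by rw [Feval, e0_x02, e1_x02, e2_x02, e3_x02]; norm_num
  have E6_1_1 : F 1 (-1) (-1) 1 0 x03 = 1 := by rw [Feval, e0_x03, e1_x03, e2_x03, e3_x03]; norm_num
  have E6_1_2 : F 1 (-1) (-1) 1 0 x13 = 0 := by rw [Feval, e0_x13, e1_x13, e2_x13, e3_x13]; norm_num
  have E6_1_3 : F 1 (-1) (-1) 1 0 x23 = 0 := by rw [Feval, e0_x23, e1_x23, e2_x23, e3_x23]; norm_num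
  have I6_1 : ∀ y, y ∈ interior (T 6) → 0 < 1 * A y + (-1) * B y + (-1) * C y + 1 * D y + 0 := by
    intro y hy
    rw [hT6] at hy
    have h := tet_pos (le_of_eq (E6_1_0).symm) (by rw [E6_1_1]; norm_num) (le_of_eq (E6_1_2).symm) (le_of_eq (E6_1_3).symm) (lin_ne _ E6_1_1 E6_1_0) hy
    simpa only [Set.mem_setOf_eq, Feval] using h
  have E6_2_0 : F 0 2 0 0 0 x02 = 0 := by rw [Feval, e0_x02, e1_x02, e2_x02, e3_x02]; norm_num
  have E6_2_1 : F 0 2 0 0 0 x03 = 0 := by rw [Feval, e0_x03, e1_x03, e2_x03, e3_x03]; norm_num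
  have E6_2_2 : F 0 2 0 0 0 x13 = 1 := by rw [Feval, e0_x13, e1_x13, e2_x13, e3_x13]; norm_num
  have E6_2_3 : F 0 2 0 0 0 x23 = 0 := by rw [Feval, e0_x23, e1_x23, e2_x23, e3_x23]; norm_num
  have I6_2 : ∀ y, y ∈ interior (T 6) → 0 < 0 * A y + 2 * B y + 0 * C y + 0 * D y + 0 := by
    intro y hy
    rw [hT6] at hy
    have h := tet_pos (le_of_eq (E6_2_0).symm) (le_of_eq (E6_2_1).symm) (by rw [E6_2_2]; norm_num) (le_of_eq (E6_2_3).symm) (lin_ne _ E6_2_2 E6_2_0) hy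
    simpa only [Set.mem_setOf_eq, Feval] using h
  have E6_3_0 : F (-1) (-1) 1 1 0 x02 = 0 := by rw [Feval, e0_x02, e1_x02, e2_x02, e3_x02]; norm_num
  have E6_3_1 : F (-1) (-1) 1 1 0 x03 = 0 := by rw [Feval, e0_x03, e1_x03, e2_x03, e3_x03]; norm_num
  have E6_3_2 : F (-1) (-1) 1 1 0 x13 = 0 := by rw [Feval, e0_x13, e1_x13, e2_x13, e3_x13]; norm_num
  have E6_3_3 : F (-1) (-1) 1 1 0 x23 = 1 := by rw [Feval, e0_x23, e1_x23, e2_x23, e3_x23]; norm_num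
  have I6_3 : ∀ y, y ∈ interior (T 6) → 0 < (-1) * A y + (-1) * B y + 1 * C y + 1 * D y + 0 := by
    intro y hy
    rw [hT6] at hy
    have h := tet_pos (le_of_eq (E6_3_0).symm) (le_of_eq (E6_3_1).symm) (le_of_eq (E6_3_2).symm) (by rw [E6_3_3]; norm_num) (lin_ne _ E6_3_3 E6_3_0) hy
    simpa only [Set.mem_setOf_eq, Feval] using h
  have E7_0_0 : F 2 0 0 0 0 x02 = 1 := by rw [Feval, e0_x02, e1_x02, e2_x02, e3_x02]; norm_num
  have E7_0_1 : F 2 0 0 0 0 x12 = 0 := by rw [Feval, e0_x12, e1_x12, e2_x12, e3_x12]; norm_num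
  have E7_0_2 : F 2 0 0 0 0 x13 = 0 := by rw [Feval, e0_x13, e1_x13, e2_x13, e3_x13]; norm_num
  have E7_0_3 : F 2 0 0 0 0 x23 = 0 := by rw [Feval, e0_x23, e1_x23, e2_x23, e3_x23]; norm_num
  have I7_0 : ∀ y, y ∈ interior (T 7) → 0 < 2 * A y + 0 * B y + 0 * C y + 0 * D y + 0 := by
    intro y hy
    rw [hT7] at hy
    have h := tet_pos (by rw [E7_0_0]; norm_num) (le_of_eq (E7_0_1).symm) (le_of_eq (E7_0_2).symm) (le_of_eq (E7_0_3).symm) (lin_ne _ E7_0_0 E7_0_1) hy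
    simpa only [Set.mem_setOf_eq, Feval] using h
  have E7_1_0 : F (-1) 1 1 (-1) 0 x02 = 0 := by rw [Feval, e0_x02, e1_x02, e2_x02, e3_x02]; norm_num
  have E7_1_1 : F (-1) 1 1 (-1) 0 x12 = 1 := by rw [Feval, e0_x12, e1_x12, e2_x12, e3_x12]; norm_num
  have E7_1_2 : F (-1) 1 1 (-1) 0 x13 = 0 := by rw [Feval, e0_x13, e1_x13, e2_x13, e3_x13]; norm_num
  have E7_1_3 : F (-1) 1 1 (-1) 0 x23 = 0 := by rw [Feval, e0_x23, e1_x23, e2_x23, e3_x23]; norm_num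
  have I7_1 : ∀ y, y ∈ interior (T 7) → 0 < (-1) * A y + 1 * B y + 1 * C y + (-1) * D y + 0 := by
    intro y hy
    rw [hT7] at hy
    have h := tet_pos (le_of_eq (E7_1_0).symm) (by rw [E7_1_1]; norm_num) (le_of_eq (E7_1_2).symm) (le_of_eq (E7_1_3).symm) (lin_ne _ E7_1_1 E7_1_0) hy
    simpa only [Set.mem_setOf_eq, Feval] using h
  have E7_2_0 : F 0 0 (-2) 0 1 x02 = 0 := by rw [Feval, e0_x02, e1_x02, e2_x02, e3_x02]; norm_num
  have E7_2_1 : F 0 0 (-2) 0 1 x12 = 0 := by rw [Feval, e0_x12, e1_x12, e2_x12, e3_x12]; norm_num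
  have E7_2_2 : F 0 0 (-2) 0 1 x13 = 1 := by rw [Feval, e0_x13, e1_x13, e2_x13, e3_x13]; norm_num
  have E7_2_3 : F 0 0 (-2) 0 1 x23 = 0 := by rw [Feval, e0_x23, e1_x23, e2_x23, e3_x23]; norm_num
  have I7_2 : ∀ y, y ∈ interior (T 7) → 0 < 0 * A y + 0 * B y + (-2) * C y + 0 * D y + 1 := by
    intro y hy
    rw [hT7] at hy
    have h := tet_pos (le_of_eq (E7_2_0).symm) (le_of_eq (E7_2_1).symm) (by rw [E7_2_2]; norm_num) (le_of_eq (E7_2_3).symm) (lin_ne _ E7_2_2 E7_2_0) hy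
    simpa only [Set.mem_setOf_eq, Feval] using h
  have E7_3_0 : F (-1) (-1) 1 1 0 x02 = 0 := by rw [Feval, e0_x02, e1_x02, e2_x02, e3_x02]; norm_num
  have E7_3_1 : F (-1) (-1) 1 1 0 x12 = 0 := by rw [Feval, e0_x12, e1_x12, e2_x12, e3_x12]; norm_num
  have E7_3_2 : F (-1) (-1) 1 1 0 x13 = 0 := by rw [Feval, e0_x13, e1_x13, e2_x13, e3_x13]; norm_num
  have E7_3_3 : F (-1) (-1) 1 1 0 x23 = 1 := by rw [Feval, e0_x23, e1_x23, e2_x23, e3_x23]; norm_num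
  have I7_3 : ∀ y, y ∈ interior (T 7) → 0 < (-1) * A y + (-1) * B y + 1 * C y + 1 * D y + 0 := by
    intro y hy
    rw [hT7] at hy
    have h := tet_pos (le_of_eq (E7_3_0).symm) (le_of_eq (E7_3_1).symm) (le_of_eq (E7_3_2).symm) (by rw [E7_3_3]; norm_num) (lin_ne _ E7_3_3 E7_3_0) hy
    simpa only [Set.mem_setOf_eq, Feval] using h
  have hm_x0 : x0 ∈ convexHull ℝ ({x0, x1, x2, x3} : Set (Fin 3 → ℝ)) := subset_convexHull ℝ _ (by simp)
  have hm_x1 : x1 ∈ convexHull ℝ ({x0, x1, x2, x3} : Set (Fin 3 → ℝ)) := subset_convexHull ℝ _ (by simp)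
  have hm_x2 : x2 ∈ convexHull ℝ ({x0, x1, x2, x3} : Set (Fin 3 → ℝ)) := subset_convexHull ℝ _ (by simp)
  have hm_x3 : x3 ∈ convexHull ℝ ({x0, x1, x2, x3} : Set (Fin 3 → ℝ)) := subset_convexHull ℝ _ (by simp)
  have hm_x01 : x01 ∈ convexHull ℝ ({x0, x1, x2, x3} : Set (Fin 3 → ℝ)) := by
    have e : x01 = (2⁻¹:ℝ) • x0 + (2⁻¹:ℝ) • x1 + (0:ℝ) • x2 + (0:ℝ) • x3 := by rw [hm01]; simp
    rw [e]
    exact mem_hull4 (by norm_num) (by norm_num) (by norm_num) (by norm_num) (by norm_num)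
  have hm_x02 : x02 ∈ convexHull ℝ ({x0, x1, x2, x3} : Set (Fin 3 → ℝ)) := by
    have e : x02 = (2⁻¹:ℝ) • x0 + (0:ℝ) • x1 + (2⁻¹:ℝ) • x2 + (0:ℝ) • x3 := by rw [hm02]; simp
    rw [e]
    exact mem_hull4 (by norm_num) (by norm_num) (by norm_num) (by norm_num) (by norm_num)
  have hm_x03 : x03 ∈ convexHull ℝ ({x0, x1, x2, x3} : Set (Fin 3 → ℝ)) := by
    have e : x03 = (2⁻¹:ℝ) • x0 + (0:ℝ) • x1 + (0:ℝ) • x2 + (2⁻¹:ℝ) • x3 := by rw [hm03]; simp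
    rw [e]
    exact mem_hull4 (by norm_num) (by norm_num) (by norm_num) (by norm_num) (by norm_num)
  have hm_x12 : x12 ∈ convexHull ℝ ({x0, x1, x2, x3} : Set (Fin 3 → ℝ)) := by
    have e : x12 = (0:ℝ) • x0 + (2⁻¹:ℝ) • x1 + (2⁻¹:ℝ) • x2 + (0:ℝ) • x3 := by rw [hm12]; simp
    rw [e]
    exact mem_hull4 (by norm_num) (by norm_num) (by norm_num) (by norm_num) (by norm_num)
  have hm_x13 : x13 ∈ convexHull ℝ ({x0, x1, x2, x3} : Set (Fin 3 → ℝ)) := by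
    have e : x13 = (0:ℝ) • x0 + (2⁻¹:ℝ) • x1 + (0:ℝ) • x2 + (2⁻¹:ℝ) • x3 := by rw [hm13]; simp
    rw [e]
    exact mem_hull4 (by norm_num) (by norm_num) (by norm_num) (by norm_num) (by norm_num)
  have hm_x23 : x23 ∈ convexHull ℝ ({x0, x1, x2, x3} : Set (Fin 3 → ℝ)) := by
    have e : x23 = (0:ℝ) • x0 + (0:ℝ) • x1 + (2⁻¹:ℝ) • x2 + (2⁻¹:ℝ) • x3 := by rw [hm23]; simp
    rw [e]
    exact mem_hull4 (by norm_num) (by norm_num) (by norm_num) (by norm_num) (by norm_num)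
  have sub0 : convexHull ℝ ({x0, x01, x02, x03} : Set (Fin 3 → ℝ)) ⊆ convexHull ℝ ({x0, x1, x2, x3} : Set (Fin 3 → ℝ)) := by
    apply convexHull_min ?_ (convex_convexHull ℝ _)
    intro y hy
    simp only [Set.mem_insert_iff, Set.mem_singleton_iff] at hy
    rcases hy with rfl | rfl | rfl | rfl
    exacts [hm_x0, hm_x01, hm_x02, hm_x03]
  have sub1 : convexHull ℝ ({x1, x01, x12, x13} : Set (Fin 3 → ℝ)) ⊆ convexHull ℝ ({x0, x1, x2, x3} : Set (Fin 3 → ℝ)) := by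
    apply convexHull_min ?_ (convex_convexHull ℝ _)
    intro y hy
    simp only [Set.mem_insert_iff, Set.mem_singleton_iff] at hy
    rcases hy with rfl | rfl | rfl | rfl
    exacts [hm_x1, hm_x01, hm_x12, hm_x13]
  have sub2 : convexHull ℝ ({x2, x02, x12, x23} : Set (Fin 3 → ℝ)) ⊆ convexHull ℝ ({x0, x1, x2, x3} : Set (Fin 3 → ℝ)) := by
    apply convexHull_min ?_ (convex_convexHull ℝ _)
    intro y hy
    simp only [Set.mem_insert_iff, Set.mem_singleton_iff] at hy
    rcases hy with rfl | rfl | rfl | rfl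
    exacts [hm_x2, hm_x02, hm_x12, hm_x23]
  have sub3 : convexHull ℝ ({x3, x03, x13, x23} : Set (Fin 3 → ℝ)) ⊆ convexHull ℝ ({x0, x1, x2, x3} : Set (Fin 3 → ℝ)) := by
    apply convexHull_min ?_ (convex_convexHull ℝ _)
    intro y hy
    simp only [Set.mem_insert_iff, Set.mem_singleton_iff] at hy
    rcases hy with rfl | rfl | rfl | rfl
    exacts [hm_x3, hm_x03, hm_x13, hm_x23]
  have sub4 : convexHull ℝ ({x01, x02, x03, x13} : Set (Fin 3 → ℝ)) ⊆ convexHull ℝ ({x0, x1, x2, x3} : Set (Fin 3 → ℝ)) := by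
    apply convexHull_min ?_ (convex_convexHull ℝ _)
    intro y hy
    simp only [Set.mem_insert_iff, Set.mem_singleton_iff] at hy
    rcases hy with rfl | rfl | rfl | rfl
    exacts [hm_x01, hm_x02, hm_x03, hm_x13]
  have sub5 : convexHull ℝ ({x01, x02, x12, x13} : Set (Fin 3 → ℝ)) ⊆ convexHull ℝ ({x0, x1, x2, x3} : Set (Fin 3 → ℝ)) := by
    apply convexHull_min ?_ (convex_convexHull ℝ _)
    intro y hy
    simp only [Set.mem_insert_iff, Set.mem_singleton_iff] at hy
    rcases hy with rfl | rfl | rfl | rfl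
    exacts [hm_x01, hm_x02, hm_x12, hm_x13]
  have sub6 : convexHull ℝ ({x02, x03, x13, x23} : Set (Fin 3 → ℝ)) ⊆ convexHull ℝ ({x0, x1, x2, x3} : Set (Fin 3 → ℝ)) := by
    apply convexHull_min ?_ (convex_convexHull ℝ _)
    intro y hy
    simp only [Set.mem_insert_iff, Set.mem_singleton_iff] at hy
    rcases hy with rfl | rfl | rfl | rfl
    exacts [hm_x02, hm_x03, hm_x13, hm_x23]
  have sub7 : convexHull ℝ ({x02, x12, x13, x23} : Set (Fin 3 → ℝ)) ⊆ convexHull ℝ ({x0, x1, x2, x3} : Set (Fin 3 → ℝ)) := by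
    apply convexHull_min ?_ (convex_convexHull ℝ _)
    intro y hy
    simp only [Set.mem_insert_iff, Set.mem_singleton_iff] at hy
    rcases hy with rfl | rfl | rfl | rfl
    exacts [hm_x02, hm_x12, hm_x13, hm_x23]
  have hnn0 : convexHull ℝ ({x0, x1, x2, x3} : Set (Fin 3 → ℝ)) ⊆ {y | 0 ≤ A y} := hull_nn (by rw [e0_x0]; norm_num) (le_of_eq (e0_x1).symm) (le_of_eq (e0_x2).symm) (le_of_eq (e0_x3).symm)
  have hnn1 : convexHull ℝ ({x0, x1, x2, x3} : Set (Fin 3 → ℝ)) ⊆ {y | 0 ≤ B y} := hull_nn (le_of_eq (e1_x0).symm) (by rw [e1_x1]; norm_num) (le_of_eq (e1_x2).symm) (le_of_eq (e1_x3).symm)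
  have hnn2 : convexHull ℝ ({x0, x1, x2, x3} : Set (Fin 3 → ℝ)) ⊆ {y | 0 ≤ C y} := hull_nn (le_of_eq (e2_x0).symm) (le_of_eq (e2_x1).symm) (by rw [e2_x2]; norm_num) (le_of_eq (e2_x3).symm)
  have hnn3 : convexHull ℝ ({x0, x1, x2, x3} : Set (Fin 3 → ℝ)) ⊆ {y | 0 ≤ D y} := hull_nn (le_of_eq (e3_x0).symm) (le_of_eq (e3_x1).symm) (le_of_eq (e3_x2).symm) (by rw [e3_x3]; norm_num)
  constructor
  · apply Set.Subset.antisymm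
    · apply Set.iUnion_subset
      intro i
      fin_cases i
      exacts [hT0 ▸ sub0, hT1 ▸ sub1, hT2 ▸ sub2, hT3 ▸ sub3, hT4 ▸ sub4, hT5 ▸ sub5, hT6 ▸ sub6, hT7 ▸ sub7]
    · intro x hx
      have ha : 0 ≤ A x := hnn0 hx
      have hbx : 0 ≤ B x := hnn1 hx
      have hcx : 0 ≤ C x := hnn2 hx
      have hdx : 0 ≤ D x := hnn3 hx
      have hsx : A x + B x + C x + D x = 1 := hsum x
      have hrx := hrep x
      rw [Set.mem_iUnion]
      rcases le_or_gt (1/2 : ℝ) (A x) with hca | hca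
      · refine ⟨0, ?_⟩
        rw [hT0]
        have ecomb : x = (2*A x - 1) • x0 + (2*B x) • x01 + (2*C x) • x02 + (2*D x) • x03 := by
          rw [hm01, hm02, hm03]
          nth_rewrite 1 [hrx]
          match_scalars <;> ring_nf <;> linarith only [hsx]
        rw [ecomb]
        exact mem_hull4 (by linarith only [ha, hbx, hcx, hdx, hsx, hca]) (by linarith only [ha, hbx, hcx, hdx, hsx, hca]) (by linarith only [ha, hbx, hcx, hdx, hsx, hca]) (by linarith only [ha, hbx, hcx, hdx, hsx, hca]) (by linarith only [ha, hbx, hcx, hdx, hsx, hca])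
      rcases le_or_gt (1/2 : ℝ) (B x) with hcb | hcb
      · refine ⟨1, ?_⟩
        rw [hT1]
        have ecomb : x = (2*B x - 1) • x1 + (2*A x) • x01 + (2*C x) • x12 + (2*D x) • x13 := by
          rw [hm01, hm12, hm13]
          nth_rewrite 1 [hrx]
          match_scalars <;> ring_nf <;> linarith only [hsx]
        rw [ecomb]
        exact mem_hull4 (by linarith only [ha, hbx, hcx, hdx, hsx, hca, hcb]) (by linarith only [ha, hbx, hcx, hdx, hsx, hca, hcb]) (by linarith only [ha, hbx, hcx, hdx, hsx, hca, hcb]) (by linarith only [ha, hbx, hcx, hdx, hsx, hca, hcb]) (by linarith only [ha, hbx, hcx, hdx, hsx, hca, hcb])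
      rcases le_or_gt (1/2 : ℝ) (C x) with hcc | hcc
      · refine ⟨2, ?_⟩
        rw [hT2]
        have ecomb : x = (2*C x - 1) • x2 + (2*A x) • x02 + (2*B x) • x12 + (2*D x) • x23 := by
          rw [hm02, hm12, hm23]
          nth_rewrite 1 [hrx]
          match_scalars <;> ring_nf <;> linarith only [hsx]
        rw [ecomb]
        exact mem_hull4 (by linarith only [ha, hbx, hcx, hdx, hsx, hca, hcb, hcc]) (by linarith only [ha, hbx, hcx, hdx, hsx, hca, hcb, hcc]) (by linarith only [ha, hbx, hcx, hdx, hsx, hca, hcb, hcc]) (by linarith only [ha, hbx, hcx, hdx, hsx, hca, hcb, hcc]) (by linarith only [ha, hbx, hcx, hdx, hsx, hca, hcb, hcc])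
      rcases le_or_gt (1/2 : ℝ) (D x) with hcd | hcd
      · refine ⟨3, ?_⟩
        rw [hT3]
        have ecomb : x = (2*D x - 1) • x3 + (2*A x) • x03 + (2*B x) • x13 + (2*C x) • x23 := by
          rw [hm03, hm13, hm23]
          nth_rewrite 1 [hrx]
          match_scalars <;> ring_nf <;> linarith only [hsx]
        rw [ecomb]
        exact mem_hull4 (by linarith only [ha, hbx, hcx, hdx, hsx, hca, hcb, hcc, hcd]) (by linarith only [ha, hbx, hcx, hdx, hsx, hca, hcb, hcc, hcd]) (by linarith only [ha, hbx, hcx, hdx, hsx, hca, hcb, hcc, hcd]) (by linarith only [ha, hbx, hcx, hdx, hsx, hca, hcb, hcc, hcd]) (by linarith only [ha, hbx, hcx, hdx, hsx, hca, hcb, hcc, hcd])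
      rcases le_or_gt 0 (A x + B x - C x - D x) with hs1 | hs1
      · rcases le_or_gt 0 (A x + D x - B x - C x) with hs2 | hs2
        · refine ⟨4, ?_⟩
          rw [hT4]
          have ecomb : x = (A x + B x - C x - D x) • x01 + (2*C x) • x02 + (A x + D x - B x - C x) • x03 + (1 - 2*A x) • x13 := by
            rw [hm01, hm02, hm03, hm13]
            nth_rewrite 1 [hrx]
            match_scalars <;> ring_nf <;> linarith only [hsx]
          rw [ecomb]
          exact mem_hull4 (by linarith only [ha, hbx, hcx, hdx, hsx, hca, hcb, hcc, hcd, hs1, hs2]) (by linarith only [ha, hbx, hcx, hdx, hsx, hca, hcb, hcc, hcd, hs1, hs2]) (by linarith only [ha, hbx, hcx, hdx, hsx, hca, hcb, hcc, hcd, hs1, hs2]) (by linarith only [ha, hbx, hcx, hdx, hsx, hca, hcb, hcc, hcd, hs1, hs2]) (by linarith only [ha, hbx, hcx, hdx, hsx, hca, hcb, hcc, hcd, hs1, hs2])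
        · refine ⟨5, ?_⟩
          rw [hT5]
          have ecomb : x = (A x + B x - C x - D x) • x01 + (1 - 2*B x) • x02 + (B x + C x - A x - D x) • x12 + (2*D x) • x13 := by
            rw [hm01, hm02, hm12, hm13]
            nth_rewrite 1 [hrx]
            match_scalars <;> ring_nf <;> linarith only [hsx]
          rw [ecomb]
          exact mem_hull4 (by linarith only [ha, hbx, hcx, hdx, hsx, hca, hcb, hcc, hcd, hs1, hs2]) (by linarith only [ha, hbx, hcx, hdx, hsx, hca, hcb, hcc, hcd, hs1, hs2]) (by linarith only [ha, hbx, hcx, hdx, hsx, hca, hcb, hcc, hcd, hs1, hs2]) (by linarith only [ha, hbx, hcx, hdx, hsx, hca, hcb, hcc, hcd, hs1, hs2]) (by linarith only [ha, hbx, hcx, hdx, hsx, hca, hcb, hcc, hcd, hs1, hs2])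
      · rcases le_or_gt 0 (A x + D x - B x - C x) with hs2 | hs2
        · refine ⟨6, ?_⟩
          rw [hT6]
          have ecomb : x = (1 - 2*D x) • x02 + (A x + D x - B x - C x) • x03 + (2*B x) • x13 + (C x + D x - A x - B x) • x23 := by
            rw [hm02, hm03, hm13, hm23]
            nth_rewrite 1 [hrx]
            match_scalars <;> ring_nf <;> linarith only [hsx]
          rw [ecomb]
          exact mem_hull4 (by linarith only [ha, hbx, hcx, hdx, hsx, hca, hcb, hcc, hcd, hs1, hs2]) (by linarith only [ha, hbx, hcx, hdx, hsx, hca, hcb, hcc, hcd, hs1, hs2]) (by linarith only [ha, hbx, hcx, hdx, hsx, hca, hcb, hcc, hcd, hs1, hs2]) (by linarith only [ha, hbx, hcx, hdx, hsx, hca, hcb, hcc, hcd, hs1, hs2]) (by linarith only [ha, hbx, hcx, hdx, hsx, hca, hcb, hcc, hcd, hs1, hs2])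
        · refine ⟨7, ?_⟩
          rw [hT7]
          have ecomb : x = (2*A x) • x02 + (B x + C x - A x - D x) • x12 + (1 - 2*C x) • x13 + (C x + D x - A x - B x) • x23 := by
            rw [hm02, hm12, hm13, hm23]
            nth_rewrite 1 [hrx]
            match_scalars <;> ring_nf <;> linarith only [hsx]
          rw [ecomb]
          exact mem_hull4 (by linarith only [ha, hbx, hcx, hdx, hsx, hca, hcb, hcc, hcd, hs1, hs2]) (by linarith only [ha, hbx, hcx, hdx, hsx, hca, hcb, hcc, hcd, hs1, hs2]) (by linarith only [ha, hbx, hcx, hdx, hsx, hca, hcb, hcc, hcd, hs1, hs2]) (by linarith only [ha, hbx, hcx, hdx, hsx, hca, hcb, hcc, hcd, hs1, hs2]) (by linarith only [ha, hbx, hcx, hdx, hsx, hca, hcb, hcc, hcd, hs1, hs2])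
  · intro i j hne
    fin_cases i <;> fin_cases j
    · exact absurd rfl hne
    · rw [Set.disjoint_left]
      intro x hx1 hx2
      linarith only [I0_0 x hx1, I0_1 x hx1, I0_2 x hx1, I0_3 x hx1, I1_0 x hx2, I1_1 x hx2, I1_2 x hx2, I1_3 x hx2, hsum x]
    · rw [Set.disjoint_left]
      intro x hx1 hx2
      linarith only [I0_0 x hx1, I0_1 x hx1, I0_2 x hx1, I0_3 x hx1, I2_0 x hx2, I2_1 x hx2, I2_2 x hx2, I2_3 x hx2, hsum x]
    · rw [Set.disjoint_left]
      intro x hx1 hx2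
      linarith only [I0_0 x hx1, I0_1 x hx1, I0_2 x hx1, I0_3 x hx1, I3_0 x hx2, I3_1 x hx2, I3_2 x hx2, I3_3 x hx2, hsum x]
    · rw [Set.disjoint_left]
      intro x hx1 hx2
      linarith only [I0_0 x hx1, I0_1 x hx1, I0_2 x hx1, I0_3 x hx1, I4_0 x hx2, I4_1 x hx2, I4_2 x hx2, I4_3 x hx2, hsum x]
    · rw [Set.disjoint_left]
      intro x hx1 hx2
      linarith only [I0_0 x hx1, I0_1 x hx1, I0_2 x hx1, I0_3 x hx1, I5_0 x hx2, I5_1 x hx2, I5_2 x hx2, I5_3 x hx2, hsum x]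
    · rw [Set.disjoint_left]
      intro x hx1 hx2
      linarith only [I0_0 x hx1, I0_1 x hx1, I0_2 x hx1, I0_3 x hx1, I6_0 x hx2, I6_1 x hx2, I6_2 x hx2, I6_3 x hx2, hsum x]
    · rw [Set.disjoint_left]
      intro x hx1 hx2
      linarith only [I0_0 x hx1, I0_1 x hx1, I0_2 x hx1, I0_3 x hx1, I7_0 x hx2, I7_1 x hx2, I7_2 x hx2, I7_3 x hx2, hsum x]
    · rw [Set.disjoint_left]
      intro x hx1 hx2
      linarith only [I1_0 x hx1, I1_1 x hx1, I1_2 x hx1, I1_3 x hx1, I0_0 x hx2, I0_1 x hx2, I0_2 x hx2, I0_3 x hx2, hsum x]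
    · exact absurd rfl hne
    · rw [Set.disjoint_left]
      intro x hx1 hx2
      linarith only [I1_0 x hx1, I1_1 x hx1, I1_2 x hx1, I1_3 x hx1, I2_0 x hx2, I2_1 x hx2, I2_2 x hx2, I2_3 x hx2, hsum x]
    · rw [Set.disjoint_left]
      intro x hx1 hx2
      linarith only [I1_0 x hx1, I1_1 x hx1, I1_2 x hx1, I1_3 x hx1, I3_0 x hx2, I3_1 x hx2, I3_2 x hx2, I3_3 x hx2, hsum x]
    · rw [Set.disjoint_left]
      intro x hx1 hx2
      linarith only [I1_0 x hx1, I1_1 x hx1, I1_2 x hx1, I1_3 x hx1, I4_0 x hx2, I4_1 x hx2, I4_2 x hx2, I4_3 x hx2, hsum x]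
    · rw [Set.disjoint_left]
      intro x hx1 hx2
      linarith only [I1_0 x hx1, I1_1 x hx1, I1_2 x hx1, I1_3 x hx1, I5_0 x hx2, I5_1 x hx2, I5_2 x hx2, I5_3 x hx2, hsum x]
    · rw [Set.disjoint_left]
      intro x hx1 hx2
      linarith only [I1_0 x hx1, I1_1 x hx1, I1_2 x hx1, I1_3 x hx1, I6_0 x hx2, I6_1 x hx2, I6_2 x hx2, I6_3 x hx2, hsum x]
    · rw [Set.disjoint_left]
      intro x hx1 hx2
      linarith only [I1_0 x hx1, I1_1 x hx1, I1_2 x hx1, I1_3 x hx1, I7_0 x hx2, I7_1 x hx2, I7_2 x hx2, I7_3 x hx2, hsum x]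
    · rw [Set.disjoint_left]
      intro x hx1 hx2
      linarith only [I2_0 x hx1, I2_1 x hx1, I2_2 x hx1, I2_3 x hx1, I0_0 x hx2, I0_1 x hx2, I0_2 x hx2, I0_3 x hx2, hsum x]
    · rw [Set.disjoint_left]
      intro x hx1 hx2
      linarith only [I2_0 x hx1, I2_1 x hx1, I2_2 x hx1, I2_3 x hx1, I1_0 x hx2, I1_1 x hx2, I1_2 x hx2, I1_3 x hx2, hsum x]
    · exact absurd rfl hne
    · rw [Set.disjoint_left]
      intro x hx1 hx2
      linarith only [I2_0 x hx1, I2_1 x hx1, I2_2 x hx1, I2_3 x hx1, I3_0 x hx2, I3_1 x hx2, I3_2 x hx2, I3_3 x hx2, hsum x]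
    · rw [Set.disjoint_left]
      intro x hx1 hx2
      linarith only [I2_0 x hx1, I2_1 x hx1, I2_2 x hx1, I2_3 x hx1, I4_0 x hx2, I4_1 x hx2, I4_2 x hx2, I4_3 x hx2, hsum x]
    · rw [Set.disjoint_left]
      intro x hx1 hx2
      linarith only [I2_0 x hx1, I2_1 x hx1, I2_2 x hx1, I2_3 x hx1, I5_0 x hx2, I5_1 x hx2, I5_2 x hx2, I5_3 x hx2, hsum x]
    · rw [Set.disjoint_left]
      intro x hx1 hx2
      linarith only [I2_0 x hx1, I2_1 x hx1, I2_2 x hx1, I2_3 x hx1, I6_0 x hx2, I6_1 x hx2, I6_2 x hx2, I6_3 x hx2, hsum x]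
    · rw [Set.disjoint_left]
      intro x hx1 hx2
      linarith only [I2_0 x hx1, I2_1 x hx1, I2_2 x hx1, I2_3 x hx1, I7_0 x hx2, I7_1 x hx2, I7_2 x hx2, I7_3 x hx2, hsum x]
    · rw [Set.disjoint_left]
      intro x hx1 hx2
      linarith only [I3_0 x hx1, I3_1 x hx1, I3_2 x hx1, I3_3 x hx1, I0_0 x hx2, I0_1 x hx2, I0_2 x hx2, I0_3 x hx2, hsum x]
    · rw [Set.disjoint_left]
      intro x hx1 hx2
      linarith only [I3_0 x hx1, I3_1 x hx1, I3_2 x hx1, I3_3 x hx1, I1_0 x hx2, I1_1 x hx2, I1_2 x hx2, I1_3 x hx2, hsum x]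
    · rw [Set.disjoint_left]
      intro x hx1 hx2
      linarith only [I3_0 x hx1, I3_1 x hx1, I3_2 x hx1, I3_3 x hx1, I2_0 x hx2, I2_1 x hx2, I2_2 x hx2, I2_3 x hx2, hsum x]
    · exact absurd rfl hne
    · rw [Set.disjoint_left]
      intro x hx1 hx2
      linarith only [I3_0 x hx1, I3_1 x hx1, I3_2 x hx1, I3_3 x hx1, I4_0 x hx2, I4_1 x hx2, I4_2 x hx2, I4_3 x hx2, hsum x]
    · rw [Set.disjoint_left]
      intro x hx1 hx2
      linarith only [I3_0 x hx1, I3_1 x hx1, I3_2 x hx1, I3_3 x hx1, I5_0 x hx2, I5_1 x hx2, I5_2 x hx2, I5_3 x hx2, hsum x]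
    · rw [Set.disjoint_left]
      intro x hx1 hx2
      linarith only [I3_0 x hx1, I3_1 x hx1, I3_2 x hx1, I3_3 x hx1, I6_0 x hx2, I6_1 x hx2, I6_2 x hx2, I6_3 x hx2, hsum x]
    · rw [Set.disjoint_left]
      intro x hx1 hx2
      linarith only [I3_0 x hx1, I3_1 x hx1, I3_2 x hx1, I3_3 x hx1, I7_0 x hx2, I7_1 x hx2, I7_2 x hx2, I7_3 x hx2, hsum x]
    · rw [Set.disjoint_left]
      intro x hx1 hx2
      linarith only [I4_0 x hx1, I4_1 x hx1, I4_2 x hx1, I4_3 x hx1, I0_0 x hx2, I0_1 x hx2, I0_2 x hx2, I0_3 x hx2, hsum x]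
    · rw [Set.disjoint_left]
      intro x hx1 hx2
      linarith only [I4_0 x hx1, I4_1 x hx1, I4_2 x hx1, I4_3 x hx1, I1_0 x hx2, I1_1 x hx2, I1_2 x hx2, I1_3 x hx2, hsum x]
    · rw [Set.disjoint_left]
      intro x hx1 hx2
      linarith only [I4_0 x hx1, I4_1 x hx1, I4_2 x hx1, I4_3 x hx1, I2_0 x hx2, I2_1 x hx2, I2_2 x hx2, I2_3 x hx2, hsum x]
    · rw [Set.disjoint_left]
      intro x hx1 hx2
      linarith only [I4_0 x hx1, I4_1 x hx1, I4_2 x hx1, I4_3 x hx1, I3_0 x hx2, I3_1 x hx2, I3_2 x hx2, I3_3 x hx2, hsum x]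
    · exact absurd rfl hne
    · rw [Set.disjoint_left]
      intro x hx1 hx2
      linarith only [I4_0 x hx1, I4_1 x hx1, I4_2 x hx1, I4_3 x hx1, I5_0 x hx2, I5_1 x hx2, I5_2 x hx2, I5_3 x hx2, hsum x]
    · rw [Set.disjoint_left]
      intro x hx1 hx2
      linarith only [I4_0 x hx1, I4_1 x hx1, I4_2 x hx1, I4_3 x hx1, I6_0 x hx2, I6_1 x hx2, I6_2 x hx2, I6_3 x hx2, hsum x]
    · rw [Set.disjoint_left]
      intro x hx1 hx2
      linarith only [I4_0 x hx1, I4_1 x hx1, I4_2 x hx1, I4_3 x hx1, I7_0 x hx2, I7_1 x hx2, I7_2 x hx2, I7_3 x hx2, hsum x]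
    · rw [Set.disjoint_left]
      intro x hx1 hx2
      linarith only [I5_0 x hx1, I5_1 x hx1, I5_2 x hx1, I5_3 x hx1, I0_0 x hx2, I0_1 x hx2, I0_2 x hx2, I0_3 x hx2, hsum x]
    · rw [Set.disjoint_left]
      intro x hx1 hx2
      linarith only [I5_0 x hx1, I5_1 x hx1, I5_2 x hx1, I5_3 x hx1, I1_0 x hx2, I1_1 x hx2, I1_2 x hx2, I1_3 x hx2, hsum x]
    · rw [Set.disjoint_left]
      intro x hx1 hx2
      linarith only [I5_0 x hx1, I5_1 x hx1, I5_2 x hx1, I5_3 x hx1, I2_0 x hx2, I2_1 x hx2, I2_2 x hx2, I2_3 x hx2, hsum x]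
    · rw [Set.disjoint_left]
      intro x hx1 hx2
      linarith only [I5_0 x hx1, I5_1 x hx1, I5_2 x hx1, I5_3 x hx1, I3_0 x hx2, I3_1 x hx2, I3_2 x hx2, I3_3 x hx2, hsum x]
    · rw [Set.disjoint_left]
      intro x hx1 hx2
      linarith only [I5_0 x hx1, I5_1 x hx1, I5_2 x hx1, I5_3 x hx1, I4_0 x hx2, I4_1 x hx2, I4_2 x hx2, I4_3 x hx2, hsum x]
    · exact absurd rfl hne
    · rw [Set.disjoint_left]
      intro x hx1 hx2
      linarith only [I5_0 x hx1, I5_1 x hx1, I5_2 x hx1, I5_3 x hx1, I6_0 x hx2, I6_1 x hx2, I6_2 x hx2, I6_3 x hx2, hsum x]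
    · rw [Set.disjoint_left]
      intro x hx1 hx2
      linarith only [I5_0 x hx1, I5_1 x hx1, I5_2 x hx1, I5_3 x hx1, I7_0 x hx2, I7_1 x hx2, I7_2 x hx2, I7_3 x hx2, hsum x]
    · rw [Set.disjoint_left]
      intro x hx1 hx2
      linarith only [I6_0 x hx1, I6_1 x hx1, I6_2 x hx1, I6_3 x hx1, I0_0 x hx2, I0_1 x hx2, I0_2 x hx2, I0_3 x hx2, hsum x]
    · rw [Set.disjoint_left]
      intro x hx1 hx2
      linarith only [I6_0 x hx1, I6_1 x hx1, I6_2 x hx1, I6_3 x hx1, I1_0 x hx2, I1_1 x hx2, I1_2 x hx2, I1_3 x hx2, hsum x]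
    · rw [Set.disjoint_left]
      intro x hx1 hx2
      linarith only [I6_0 x hx1, I6_1 x hx1, I6_2 x hx1, I6_3 x hx1, I2_0 x hx2, I2_1 x hx2, I2_2 x hx2, I2_3 x hx2, hsum x]
    · rw [Set.disjoint_left]
      intro x hx1 hx2
      linarith only [I6_0 x hx1, I6_1 x hx1, I6_2 x hx1, I6_3 x hx1, I3_0 x hx2, I3_1 x hx2, I3_2 x hx2, I3_3 x hx2, hsum x]
    · rw [Set.disjoint_left]
      intro x hx1 hx2
      linarith only [I6_0 x hx1, I6_1 x hx1, I6_2 x hx1, I6_3 x hx1, I4_0 x hx2, I4_1 x hx2, I4_2 x hx2, I4_3 x hx2, hsum x]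
    · rw [Set.disjoint_left]
      intro x hx1 hx2
      linarith only [I6_0 x hx1, I6_1 x hx1, I6_2 x hx1, I6_3 x hx1, I5_0 x hx2, I5_1 x hx2, I5_2 x hx2, I5_3 x hx2, hsum x]
    · exact absurd rfl hne
    · rw [Set.disjoint_left]
      intro x hx1 hx2
      linarith only [I6_0 x hx1, I6_1 x hx1, I6_2 x hx1, I6_3 x hx1, I7_0 x hx2, I7_1 x hx2, I7_2 x hx2, I7_3 x hx2, hsum x]
    · rw [Set.disjoint_left]
      intro x hx1 hx2
      linarith only [I7_0 x hx1, I7_1 x hx1, I7_2 x hx1, I7_3 x hx1, I0_0 x hx2, I0_1 x hx2, I0_2 x hx2, I0_3 x hx2, hsum x]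
    · rw [Set.disjoint_left]
      intro x hx1 hx2
      linarith only [I7_0 x hx1, I7_1 x hx1, I7_2 x hx1, I7_3 x hx1, I1_0 x hx2, I1_1 x hx2, I1_2 x hx2, I1_3 x hx2, hsum x]
    · rw [Set.disjoint_left]
      intro x hx1 hx2
      linarith only [I7_0 x hx1, I7_1 x hx1, I7_2 x hx1, I7_3 x hx1, I2_0 x hx2, I2_1 x hx2, I2_2 x hx2, I2_3 x hx2, hsum x]
    · rw [Set.disjoint_left]
      intro x hx1 hx2
      linarith only [I7_0 x hx1, I7_1 x hx1, I7_2 x hx1, I7_3 x hx1, I3_0 x hx2, I3_1 x hx2, I3_2 x hx2, I3_3 x hx2, hsum x]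
    · rw [Set.disjoint_left]
      intro x hx1 hx2
      linarith only [I7_0 x hx1, I7_1 x hx1, I7_2 x hx1, I7_3 x hx1, I4_0 x hx2, I4_1 x hx2, I4_2 x hx2, I4_3 x hx2, hsum x]
    · rw [Set.disjoint_left]
      intro x hx1 hx2
      linarith only [I7_0 x hx1, I7_1 x hx1, I7_2 x hx1, I7_3 x hx1, I5_0 x hx2, I5_1 x hx2, I5_2 x hx2, I5_3 x hx2, hsum x]
    · rw [Set.disjoint_left]
      intro x hx1 hx2
      linarith only [I7_0 x hx1, I7_1 x hx1, I7_2 x hx1, I7_3 x hx1, I6_0 x hx2, I6_1 x hx2, I6_2 x hx2, I6_3 x hx2, hsum x]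
    · exact absurd rfl hne
end
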